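/- arXiv:2310.17296 — 6 statements merged into one kernel-verified Lean document; each statement's English description precedes it below -/
import Mathlib

section
/- For every N ≥ 1 and every word (i₁,…,i_N) ∈ {1,…,n}^N one has T_{i₁}⋯T_{i_N} S_{i_N}⋯S_{i₁} = π(1_{X_{i₁…i_N}}) on L^p_μ(X), where X_{i₁…i_N} := {x ∈ X : x₁ = i₁, …, x_N = i_N} is the cylinder set determined by the word. -/
open MeasureTheory
open scoped ENNReal

noncomputable section

/-- The Bernoulli shift space `X = {1,…,n}^ℕ`, modelled as `ℕ → Fin n`. -/
abbrev BSpace (n : ℕ) := ℕ → Fin n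

/-- The shift map `φ(x₁,x₂,x₃,…) = (x₂,x₃,…)`. -/
def shift (n : ℕ) (x : BSpace n) : BSpace n := fun k => x (k + 1)

lemma shift_continuous (n : ℕ) : Continuous (shift n) :=
  continuous_pi fun k => continuous_apply (k + 1)

/-- The shift map as a continuous map. -/
def shiftCM (n : ℕ) : C(BSpace n, BSpace n) := ⟨shift n, shift_continuous n⟩

/-- The preimage section `iy = (i, y₁, y₂, …)` of the shift. -/
def cons (n : ℕ) (i : Fin n) (x : BSpace n) : BSpace n :=
  fun k => Nat.casesOn k i fun m => x m

lemma cons_continuous (n : ℕ) (i : Fin n) : Continuous (cons n i) := by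
  apply continuous_pi
  intro k
  cases k with
  | zero => exact continuous_const
  | succ m => exact continuous_apply m

/-- The transfer (Ruelle–Perron–Frobenius) operator
`L(a)(y) = Σ_{x ∈ φ⁻¹(y)} ϱ(x) a(x) = Σ_{i=1}^n ϱ(iy) a(iy)`. -/
def transfer (n : ℕ) (ϱ : C(BSpace n, ℝ)) (a : C(BSpace n, ℂ)) : C(BSpace n, ℂ) :=
  ⟨fun y => ∑ i : Fin n, (ϱ (cons n i y) : ℂ) * a (cons n i y), by
    refine continuous_finset_sum _ fun i _ => ?_
    exact (Complex.continuous_ofReal.comp (ϱ.continuous.comp (cons_continuous n i))).mul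
      (a.continuous.comp (cons_continuous n i))⟩

lemma isClopen_cyl (n : ℕ) (i : Fin n) : IsClopen {x : BSpace n | x 0 = i} :=
  (isClopen_discrete ({i} : Set (Fin n))).preimage (continuous_apply 0)

/-- The power `ϱ^r` of the (strictly positive) potential, as a continuous map. -/
def rhoPow (n : ℕ) (ϱ : C(BSpace n, ℝ)) (hϱ : ∀ x, 0 < ϱ x) (r : ℝ) : C(BSpace n, ℝ) :=
  ⟨fun x => ϱ x ^ r, ϱ.continuous.rpow_const fun x => Or.inl (hϱ x).ne'⟩

/-- The complex-valued power `ϱ^r` of the potential, as a continuous map. -/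
def rhoPowC (n : ℕ) (ϱ : C(BSpace n, ℝ)) (hϱ : ∀ x, 0 < ϱ x) (r : ℝ) : C(BSpace n, ℂ) :=
  ⟨fun x => ((ϱ x ^ r : ℝ) : ℂ), Complex.continuous_ofReal.comp (rhoPow n ϱ hϱ r).continuous⟩

/-- The continuous function `g·1_{X_i}` (product of `g` with the indicator of the clopen
cylinder `X_i = {x : x₁ = i}`), as a complex-valued continuous map. -/
def wInd (n : ℕ) (i : Fin n) (g : C(BSpace n, ℝ)) : C(BSpace n, ℂ) :=
  ⟨fun x => if x 0 = i then (g x : ℂ) else 0, by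
    refine Continuous.if (fun x hx => ?_)
      (Complex.continuous_ofReal.comp g.continuous) continuous_const
    rw [(isClopen_cyl n i).frontier_eq] at hx
    exact absurd hx (Set.notMem_empty x)⟩

/-- The operator `T_i = π(ϱ^{-1/p}·1_{X_i}) T`. -/
def TOp {A : Type*} [Mul A] (n : ℕ) (ϱ : C(BSpace n, ℝ)) (hϱ : ∀ x, 0 < ϱ x) (p : ℝ≥0∞)
    (π : C(BSpace n, ℂ) → A) (T : A) (i : Fin n) : A :=
  π (wInd n i (rhoPow n ϱ hϱ (-(1 / p.toReal)))) * T

/-- The operator `S_i = S π(ϱ^{-1/q}·1_{X_i})`, where `1/q = 1 - 1/p`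
(with the convention `ϱ^{-1/q} = ϱ^0 = 1` when `p = 1`). -/
def SOp {A : Type*} [Mul A] (n : ℕ) (ϱ : C(BSpace n, ℝ)) (hϱ : ∀ x, 0 < ϱ x) (p : ℝ≥0∞)
    (π : C(BSpace n, ℂ) → A) (S : A) (i : Fin n) : A :=
  S * π (wInd n i (rhoPow n ϱ hϱ (-(1 - 1 / p.toReal))))

/-- The indicator of the cylinder set `X_{i₁…i_N} = {x : x₁ = i₁, …, x_N = i_N}`
determined by the word `w = (i₁,…,i_N)`, as a continuous map. -/
def cylCM (n N : ℕ) (w : Fin N → Fin n) : C(BSpace n, ℂ) :=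
  ⟨fun x => if (fun k : Fin N => x k) = w then 1 else 0, by
    have hclopen : IsClopen {x : BSpace n | (fun k : Fin N => x k) = w} :=
      (isClopen_discrete ({w} : Set (Fin N → Fin n))).preimage
        (continuous_pi fun k => continuous_apply (k : ℕ))
    refine Continuous.if (fun x hx => ?_) continuous_const continuous_const
    rw [hclopen.frontier_eq] at hx
    exact absurd hx (Set.notMem_empty x)⟩



set_option linter.unusedSectionVars false

lemma shift_cons (n : ℕ) (i : Fin n) (y : BSpace n) : shift n (cons n i y) = y := rfl

lemma cons_zero (n : ℕ) (i : Fin n) (y : BSpace n) : cons n i y 0 = i := rfl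

lemma cons_shift {n : ℕ} {i : Fin n} {x : BSpace n} (h : x 0 = i) :
    cons n i (shift n x) = x := by
  funext k
  cases k with
  | zero => exact h.symm
  | succ m => rfl

lemma cm_integrable {n : ℕ} (μ : Measure (BSpace n)) [IsFiniteMeasure μ]
    {f : BSpace n → ℝ} (hf : Continuous f) : Integrable f μ :=
  hf.integrable_of_hasCompactSupport (HasCompactSupport.of_compactSpace f)

section trans
variable {n : ℕ} (ϱ : C(BSpace n, ℝ)) (hϱpos : ∀ x, 0 < ϱ x)
  (hϱsum : ∀ y : BSpace n, ∑ i : Fin n, ϱ (cons n i y) = 1)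
  (μ : Measure (BSpace n)) [IsProbabilityMeasure μ]
  (hμ : ∀ a : C(BSpace n, ℂ), ∫ y, transfer n ϱ a y ∂μ = ∫ y, a y ∂μ)

include hμ in
lemma hmuR (a : C(BSpace n, ℝ)) :
    ∫ y, ∑ i : Fin n, ϱ (cons n i y) * a (cons n i y) ∂μ = ∫ y, a y ∂μ := by
  have h := hμ ⟨fun x => ((a x : ℝ) : ℂ), Complex.continuous_ofReal.comp a.continuous⟩
  have h1 : ∀ y, transfer n ϱ ⟨fun x => ((a x : ℝ) : ℂ),
      Complex.continuous_ofReal.comp a.continuous⟩ y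
      = ((∑ i : Fin n, ϱ (cons n i y) * a (cons n i y) : ℝ) : ℂ) := by
    intro y
    simp [transfer]
  simp only [h1, ContinuousMap.coe_mk] at h
  have h2 := (integral_ofReal (𝕜 := ℂ)
      (f := fun y => ∑ i : Fin n, ϱ (cons n i y) * a (cons n i y)) (μ := μ)).symm.trans
    (h.trans (integral_ofReal (𝕜 := ℂ) (f := fun y => a y) (μ := μ)))
  exact_mod_cast h2
end trans

section meas
variable {n : ℕ} (ϱ : C(BSpace n, ℝ)) (hϱpos : ∀ x, 0 < ϱ x)
  (hϱsum : ∀ y : BSpace n, ∑ i : Fin n, ϱ (cons n i y) = 1)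
  (μ : Measure (BSpace n)) [IsProbabilityMeasure μ]
  (hμ : ∀ a : C(BSpace n, ℂ), ∫ y, transfer n ϱ a y ∂μ = ∫ y, a y ∂μ)

include hϱpos hϱsum hμ in
lemma nu_eq :
    μ = ∑ i : Fin n, (μ.withDensity fun y => ENNReal.ofReal (ϱ (cons n i y))).map (cons n i) := by
  apply ext_of_forall_lintegral_eq_of_IsFiniteMeasure
  intro f
  have hfc : Continuous fun x : BSpace n => (f x : ℝ) := NNReal.continuous_coe.comp f.continuous
  have hfm : Measurable fun x : BSpace n => (f x : ℝ≥0∞) :=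
    measurable_coe_nnreal_ennreal.comp f.continuous.measurable
  have hint : ∀ i : Fin n,
      Integrable (fun y => ϱ (cons n i y) * (f (cons n i y) : ℝ)) μ := fun i =>
    cm_integrable μ ((ϱ.continuous.comp (cons_continuous n i)).mul
      (hfc.comp (cons_continuous n i)))
  rw [lintegral_finset_sum_measure]
  have hterm : ∀ i : Fin n,
      ∫⁻ x, (f x : ℝ≥0∞)
          ∂((μ.withDensity fun y => ENNReal.ofReal (ϱ (cons n i y))).map (cons n i))
        = ENNReal.ofReal (∫ y, ϱ (cons n i y) * (f (cons n i y) : ℝ) ∂μ) := by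
    intro i
    have hstep : ∫⁻ a, ((f (cons n i a)) : ℝ≥0∞)
          ∂(μ.withDensity fun y => ENNReal.ofReal (ϱ (cons n i y)))
        = ∫⁻ y, ENNReal.ofReal (ϱ (cons n i y)) * ((f (cons n i y)) : ℝ≥0∞) ∂μ :=
      lintegral_withDensity_eq_lintegral_mul μ
        (ENNReal.measurable_ofReal.comp (ϱ.continuous.comp (cons_continuous n i)).measurable)
        (hfm.comp (cons_continuous n i).measurable)
    rw [lintegral_map hfm (cons_continuous n i).measurable, hstep,
      ofReal_integral_eq_lintegral_ofReal (hint i)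
        (ae_of_all _ fun y => mul_nonneg (hϱpos _).le (f _).coe_nonneg)]
    refine lintegral_congr fun y => ?_
    rw [ENNReal.ofReal_mul (hϱpos _).le, ENNReal.ofReal_coe_nnreal]
  simp only [hterm]
  have hR := hmuR ϱ μ hμ ⟨fun x => (f x : ℝ), hfc⟩
  simp only [ContinuousMap.coe_mk] at hR
  rw [← ENNReal.ofReal_sum_of_nonneg (fun i _ => integral_nonneg
      (fun y => mul_nonneg (hϱpos _).le (f _).coe_nonneg)),
    ← integral_finset_sum _ (fun i _ => hint i), hR,
    lintegral_coe_eq_integral _ (cm_integrable μ hfc)]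

include hϱsum hμ in
lemma map_shift_eq : μ.map (shift n) = μ := by
  have : IsProbabilityMeasure (μ.map (shift n)) :=
    Measure.isProbabilityMeasure_map (shift_continuous n).measurable.aemeasurable
  apply ext_of_forall_lintegral_eq_of_IsFiniteMeasure
  intro f
  have hfc : Continuous fun x : BSpace n => (f x : ℝ) := NNReal.continuous_coe.comp f.continuous
  have hfm : Measurable fun x : BSpace n => (f x : ℝ≥0∞) :=
    measurable_coe_nnreal_ennreal.comp f.continuous.measurable
  rw [lintegral_map hfm (shift_continuous n).measurable]
  have key : ∫ x, (f (shift n x) : ℝ) ∂μ = ∫ x, (f x : ℝ) ∂μ := by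
    have h := hmuR ϱ μ hμ (ContinuousMap.comp ⟨fun x => (f x : ℝ), hfc⟩ ⟨shift n, shift_continuous n⟩)
    simpa [shift_cons, ← Finset.sum_mul, hϱsum] using h.symm
  rw [lintegral_coe_eq_integral _ (cm_integrable μ (hfc.comp (shift_continuous n))),
    lintegral_coe_eq_integral _ (cm_integrable μ hfc), key]

include hϱsum hμ in
lemma qmp_shift : Measure.QuasiMeasurePreserving (shift n) μ μ :=
  ⟨(shift_continuous n).measurable,
    Measure.absolutelyContinuous_of_le (le_of_eq (map_shift_eq ϱ hϱsum μ hμ))⟩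

include hϱpos hϱsum hμ in
lemma qmp_cons (i : Fin n) : Measure.QuasiMeasurePreserving (cons n i) μ μ := by
  refine ⟨(cons_continuous n i).measurable, Measure.AbsolutelyContinuous.mk fun N hN hN0 => ?_⟩
  rw [Measure.map_apply (cons_continuous n i).measurable hN]
  set A := cons n i ⁻¹' N with hA
  have hAm : MeasurableSet A := hN.preimage (cons_continuous n i).measurable
  have hν : (∑ j : Fin n,
      (μ.withDensity fun y => ENNReal.ofReal (ϱ (cons n j y))).map (cons n j)) N = 0 := by
    rw [← nu_eq ϱ hϱpos hϱsum μ hμ]; exact hN0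
  rw [Measure.finset_sum_apply] at hν
  have hz : ((μ.withDensity fun y => ENNReal.ofReal (ϱ (cons n i y))).map (cons n i)) N = 0 :=
    (Finset.sum_eq_zero_iff.mp hν) i (Finset.mem_univ i)
  rw [Measure.map_apply (cons_continuous n i).measurable hN,
    withDensity_apply _ hAm] at hz
  have h0 := (setLIntegral_eq_zero_iff hAm
      (ENNReal.measurable_ofReal.comp (ϱ.continuous.comp (cons_continuous n i)).measurable :
        Measurable fun y => ENNReal.ofReal (ϱ (cons n i y)))).mp hz
  have h1 : ∀ᵐ x ∂μ, x ∉ A :=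
    h0.mono fun x hx hxA => (ENNReal.ofReal_pos.mpr (hϱpos _)).ne' (hx hxA)
  exact measure_eq_zero_iff_ae_notMem.mpr h1

end meas


/-- The continuous function `x ↦ 1_{X_i}(x) · a(φ(x))`. -/
def indComp (n : ℕ) (i : Fin n) (a : C(BSpace n, ℂ)) : C(BSpace n, ℂ) :=
  ⟨fun x => if x 0 = i then a (shift n x) else 0, by
    refine Continuous.if (fun x hx => ?_) (a.continuous.comp (shift_continuous n)) continuous_const
    rw [(isClopen_cyl n i).frontier_eq] at hx
    exact absurd hx (Set.notMem_empty x)⟩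

lemma key_step {n : ℕ} (ϱ : C(BSpace n, ℝ)) (hϱpos : ∀ x, 0 < ϱ x)
    (hϱsum : ∀ y : BSpace n, ∑ i : Fin n, ϱ (cons n i y) = 1)
    (μ : Measure (BSpace n)) [IsProbabilityMeasure μ]
    (hμ : ∀ a : C(BSpace n, ℂ), ∫ y, transfer n ϱ a y ∂μ = ∫ y, a y ∂μ)
    (p : ℝ≥0∞) [Fact (1 ≤ p)]
    (Tφ Sφ : Lp ℂ p μ →L[ℂ] Lp ℂ p μ)
    (π : C(BSpace n, ℂ) → Lp ℂ p μ →L[ℂ] Lp ℂ p μ)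
    (hTφ : ∀ f : Lp ℂ p μ, (Tφ f : BSpace n → ℂ) =ᵐ[μ] fun x => f (shift n x))
    (hSφ : ∀ f : Lp ℂ p μ,
      (Sφ f : BSpace n → ℂ) =ᵐ[μ] fun y => ∑ i : Fin n, (ϱ (cons n i y) : ℂ) * f (cons n i y))
    (hπ : ∀ (a : C(BSpace n, ℂ)) (f : Lp ℂ p μ),
      (π a f : BSpace n → ℂ) =ᵐ[μ] fun x => a x * f x)
    (i : Fin n) (a : C(BSpace n, ℂ)) :
    TOp n ϱ hϱpos p π Tφ i * π a * SOp n ϱ hϱpos p π Sφ i = π (indComp n i a) := by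
  refine ContinuousLinearMap.ext fun f => ?_
  simp only [TOp, SOp, ContinuousLinearMap.mul_apply]
  set s := 1 / p.toReal with hs
  set v := wInd n i (rhoPow n ϱ hϱpos (-(1 - s))) with hv
  set w := wInd n i (rhoPow n ϱ hϱpos (-s)) with hw
  refine Lp.ext ?_
  have h1 := hπ v f
  have h1' : ∀ j : Fin n, (fun y => (π v f : BSpace n → ℂ) (cons n j y))
      =ᵐ[μ] fun y => v (cons n j y) * f (cons n j y) :=
    fun j => (qmp_cons ϱ hϱpos hϱsum μ hμ j).ae_eq_comp h1
  have h2' : (Sφ (π v f) : BSpace n → ℂ)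
      =ᵐ[μ] fun y => ((ϱ (cons n i y) ^ s : ℝ) : ℂ) * f (cons n i y) := by
    refine (hSφ (π v f)).trans ?_
    have hall : ∀ᵐ y ∂μ, ∀ j : Fin n,
        (π v f : BSpace n → ℂ) (cons n j y) = v (cons n j y) * f (cons n j y) :=
      ae_all_iff.mpr h1'
    refine hall.mono fun y hy => ?_
    have e1 : ∑ j : Fin n, (ϱ (cons n j y) : ℂ) * (π v f : BSpace n → ℂ) (cons n j y)
        = ∑ j : Fin n, (ϱ (cons n j y) : ℂ) * (v (cons n j y) * f (cons n j y)) :=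
      Finset.sum_congr rfl fun j _ => by rw [hy j]
    have hvj : ∀ j : Fin n, v (cons n j y)
        = if j = i then ((ϱ (cons n j y) ^ (-(1 - s)) : ℝ) : ℂ) else 0 := by
      intro j
      simp only [hv, wInd, rhoPow, ContinuousMap.coe_mk, cons_zero]
      split_ifs with h <;> simp [h, cons_zero]
    have hsc : (ϱ (cons n i y) : ℂ) * ((ϱ (cons n i y) ^ (-(1 - s)) : ℝ) : ℂ)
        = ((ϱ (cons n i y) ^ s : ℝ) : ℂ) := by
      rw [← Complex.ofReal_mul]
      congr 1
      calc ϱ (cons n i y) * ϱ (cons n i y) ^ (-(1 - s))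
          = ϱ (cons n i y) ^ (1 : ℝ) * ϱ (cons n i y) ^ (-(1 - s)) := by
            rw [Real.rpow_one]
        _ = ϱ (cons n i y) ^ ((1 : ℝ) + -(1 - s)) := (Real.rpow_add (hϱpos _) _ _).symm
        _ = ϱ (cons n i y) ^ s := by norm_num
    dsimp only
    rw [e1]
    simp only [hvj, mul_ite, ite_mul, mul_zero, zero_mul, Finset.sum_ite_eq',
      Finset.mem_univ, if_true]
    rw [← mul_assoc, hsc]
  have h3 : (π a (Sφ (π v f)) : BSpace n → ℂ)
      =ᵐ[μ] fun y => a y * (((ϱ (cons n i y) ^ s : ℝ) : ℂ) * f (cons n i y)) :=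
    (hπ a _).trans (h2'.mono fun y hy => by dsimp only; rw [hy])
  have h4' := (qmp_shift ϱ hϱsum μ hμ).ae_eq_comp h3
  simp only [Function.comp_def] at h4'
  have h4 : (Tφ (π a (Sφ (π v f))) : BSpace n → ℂ)
      =ᵐ[μ] fun x => a (shift n x) *
        (((ϱ (cons n i (shift n x)) ^ s : ℝ) : ℂ) * f (cons n i (shift n x))) :=
    (hTφ _).trans h4'
  have h5 : (π w (Tφ (π a (Sφ (π v f)))) : BSpace n → ℂ)
      =ᵐ[μ] fun x => w x * (a (shift n x) *
        (((ϱ (cons n i (shift n x)) ^ s : ℝ) : ℂ) * f (cons n i (shift n x)))) :=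
    (hπ w _).trans (h4.mono fun x hx => by dsimp only; rw [hx])
  refine h5.trans ?_
  refine Filter.EventuallyEq.trans ?_ (hπ (indComp n i a) f).symm
  refine ae_of_all μ fun x => ?_
  dsimp only
  by_cases hx : x 0 = i
  · have hcs : cons n i (shift n x) = x := cons_shift hx
    have hwx : w x = ((ϱ x ^ (-s) : ℝ) : ℂ) := by
      simp only [hw, wInd, rhoPow, ContinuousMap.coe_mk, if_pos hx]
    have hix : indComp n i a x = a (shift n x) := by
      simp only [indComp, ContinuousMap.coe_mk, if_pos hx]
    have hsc2 : ((ϱ x ^ (-s) : ℝ) : ℂ) * ((ϱ x ^ s : ℝ) : ℂ) = 1 := by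
      rw [← Complex.ofReal_mul, ← Real.rpow_add (hϱpos x)]
      norm_num
    rw [hcs, hwx, hix]
    calc ((ϱ x ^ (-s) : ℝ) : ℂ) * (a (shift n x) * (((ϱ x ^ s : ℝ) : ℂ) * f x))
        = (((ϱ x ^ (-s) : ℝ) : ℂ) * ((ϱ x ^ s : ℝ) : ℂ)) * (a (shift n x) * f x) := by ring
      _ = a (shift n x) * f x := by rw [hsc2, one_mul]
  · have hwx : w x = 0 := by
      simp only [hw, wInd, rhoPow, ContinuousMap.coe_mk, if_neg hx]
    have hix : indComp n i a x = 0 := by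
      simp only [indComp, ContinuousMap.coe_mk, if_neg hx]
    rw [hwx, hix, zero_mul, zero_mul]


/-- For every `N ≥ 1` and every word `(i₁,…,i_N) ∈ {1,…,n}^N` one has
`T_{i₁}⋯T_{i_N} S_{i_N}⋯S_{i₁} = π(1_{X_{i₁…i_N}})` on `L^p_μ(X)`, where
`X_{i₁…i_N} = {x ∈ X : x₁ = i₁, …, x_N = i_N}` is the cylinder set determined by the word. -/
theorem stmt_4 (n : ℕ) (hn : 2 ≤ n)
    (ϱ : C(BSpace n, ℝ)) (hϱpos : ∀ x, 0 < ϱ x)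
    (hϱsum : ∀ y : BSpace n, ∑ i : Fin n, ϱ (cons n i y) = 1)
    (μ : Measure (BSpace n)) [IsProbabilityMeasure μ]
    (hμ : ∀ a : C(BSpace n, ℂ), ∫ y, transfer n ϱ a y ∂μ = ∫ y, a y ∂μ)
    (p : ℝ≥0∞) [Fact (1 ≤ p)] (hp : p ≠ ∞)
    (Tφ Sφ : Lp ℂ p μ →L[ℂ] Lp ℂ p μ)
    (π : C(BSpace n, ℂ) → Lp ℂ p μ →L[ℂ] Lp ℂ p μ)
    (hTφ : ∀ f : Lp ℂ p μ, (Tφ f : BSpace n → ℂ) =ᵐ[μ] fun x => f (shift n x))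
    (hSφ : ∀ f : Lp ℂ p μ,
      (Sφ f : BSpace n → ℂ) =ᵐ[μ] fun y => ∑ i : Fin n, (ϱ (cons n i y) : ℂ) * f (cons n i y))
    (hπ : ∀ (a : C(BSpace n, ℂ)) (f : Lp ℂ p μ),
      (π a f : BSpace n → ℂ) =ᵐ[μ] fun x => a x * f x) :
    ∀ (N : ℕ), 1 ≤ N → ∀ w : Fin N → Fin n,
      (List.ofFn fun k : Fin N => TOp n ϱ hϱpos p π Tφ (w k)).prod *
        ((List.ofFn fun k : Fin N => SOp n ϱ hϱpos p π Sφ (w k)).reverse).prod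
          = π (cylCM n N w) := by
  have good : ∀ (N : ℕ) (w : Fin N → Fin n),
      (List.ofFn fun k : Fin N => TOp n ϱ hϱpos p π Tφ (w k)).prod *
        ((List.ofFn fun k : Fin N => SOp n ϱ hϱpos p π Sφ (w k)).reverse).prod
          = π (cylCM n N w) := by
    intro N
    induction N with
    | zero =>
      intro w
      simp only [List.ofFn_zero, List.prod_nil, List.reverse_nil, one_mul]
      refine ContinuousLinearMap.ext fun f => ?_
      rw [ContinuousLinearMap.one_apply]
      refine Lp.ext ?_
      refine Filter.EventuallyEq.trans ?_ (hπ (cylCM n 0 w) f).symm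
      refine ae_of_all μ fun x => ?_
      have hw : (fun k : Fin 0 => x k) = w := funext fun k => k.elim0
      simp [cylCM, hw]
    | succ N ih =>
      intro w
      rw [List.ofFn_succ (f := fun k : Fin (N + 1) => TOp n ϱ hϱpos p π Tφ (w k)),
        List.ofFn_succ (f := fun k : Fin (N + 1) => SOp n ϱ hϱpos p π Sφ (w k)),
        List.reverse_cons, List.prod_cons, List.prod_append, List.prod_cons,
        List.prod_nil, mul_one]
      have hassoc : ∀ (A B C D : Lp ℂ p μ →L[ℂ] Lp ℂ p μ),
          A * B * (C * D) = A * (B * C) * D := fun A B C D => by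
        rw [mul_assoc, mul_assoc, mul_assoc]
      rw [hassoc, ih (fun k => w k.succ),
        key_step ϱ hϱpos hϱsum μ hμ p Tφ Sφ π hTφ hSφ hπ (w 0) (cylCM n N fun k => w k.succ)]
      refine congrArg π ?_
      ext x
      simp only [indComp, cylCM, ContinuousMap.coe_mk]
      by_cases h : (fun k : Fin (N + 1) => x k) = w
      · have h0 : x 0 = w 0 := by simpa using congrFun h 0
        have hsft : (fun k : Fin N => shift n x k) = fun k => w k.succ := by
          funext k
          simpa [shift] using congrFun h k.succ
        simp [h, h0, hsft]
      · rw [if_neg h]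
        by_cases h0 : x 0 = w 0
        · have hne : ¬((fun k : Fin N => shift n x k) = fun k => w k.succ) := by
            intro hsft
            apply h
            funext k
            refine Fin.cases ?_ ?_ k
            · simpa using h0
            · intro j
              simpa [shift] using congrFun hsft j
          simp [h0, hne]
        · simp [h0]
  intro N _ w
  exact good N w

end
end

section
/- Let (π,T,S) be a covariant representation of L on L^p_ν(Ω). Then for every N ≥ 1 and every word (i₁,…,i_N) ∈ {1,…,n}^N one has T_{i₁}⋯T_{i_N} S_{i_N}⋯S_{i₁} = π(1_{X_{i₁…i_N}}), where X_{i₁…i_N} := {x ∈ X : x₁ = i₁, …, x_N = i_N} is the cylinder set determined by the word. -/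
open MeasureTheory
open scoped ENNReal

noncomputable section

lemma wInd_mul_wInd_ne (n : ℕ) (i j : Fin n) (h : j ≠ i) (b : C(BSpace n, ℂ))
    (g : C(BSpace n, ℝ)) : (wInd n i 1 * b) * wInd n j g = 0 := by
  ext x
  simp only [ContinuousMap.mul_apply, ContinuousMap.zero_apply, wInd, ContinuousMap.coe_mk]
  split_ifs with h1 h2
  · exact absurd (h1.symm.trans h2).symm h
  · simp
  · simp
  · simp

lemma wInd_mul_wInd_self (n : ℕ) (i : Fin n) (b : C(BSpace n, ℂ))
    (g : C(BSpace n, ℝ)) : (wInd n i 1 * b) * wInd n i g = b * wInd n i g := by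
  ext x
  simp only [ContinuousMap.mul_apply, wInd, ContinuousMap.coe_mk]
  split_ifs with h1 <;> simp

lemma cylCM_zero (n : ℕ) (w : Fin 0 → Fin n) : cylCM n 0 w = 1 := by
  ext x
  simp only [cylCM, ContinuousMap.coe_mk, ContinuousMap.one_apply]
  rw [if_pos (funext fun k => k.elim0)]

lemma wInd_cyl (n N : ℕ) (w : Fin (N + 1) → Fin n) :
    wInd n (w 0) 1 * (cylCM n N (fun k => w k.succ)).comp (shiftCM n) = cylCM n (N + 1) w := by
  ext x
  simp only [ContinuousMap.mul_apply, ContinuousMap.comp_apply, wInd, cylCM,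
    ContinuousMap.coe_mk, shiftCM, shift]
  have hiff : ((fun k : Fin (N + 1) => x k) = w) ↔
      (x 0 = w 0 ∧ (fun k : Fin N => x (k + 1)) = fun k => w k.succ) := by
    constructor
    · intro h
      refine ⟨?_, funext fun k => ?_⟩
      · simpa using congrFun h 0
      · simpa [Fin.val_succ] using congrFun h k.succ
    · rintro ⟨hA, hB⟩
      funext k
      induction k using Fin.cases with
      | zero => simpa using hA
      | succ m => simpa [Fin.val_succ] using congrFun hB m
  split_ifs with h1 h2 h3 <;> simp_all

/-- For a covariant representation `(π,T,S)` of `L` on `L^p_ν(Ω)`: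
for every `N ≥ 1` and every word `(i₁,…,i_N) ∈ {1,…,n}^N` one has
`T_{i₁}⋯T_{i_N} S_{i_N}⋯S_{i₁} = π(1_{X_{i₁…i_N}})`, where `X_{i₁…i_N}` is the
cylinder set determined by the word. -/
theorem stmt_7 (n : ℕ) (hn : 2 ≤ n)
    (ϱ : C(BSpace n, ℝ)) (hϱpos : ∀ x, 0 < ϱ x)
    (hϱsum : ∀ y : BSpace n, ∑ i : Fin n, ϱ (cons n i y) = 1)
    {Ω : Type*} [MeasurableSpace Ω] (ν : Measure Ω)
    (p : ℝ≥0∞) [Fact (1 ≤ p)] (hp : p ≠ ∞)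
    (π : C(BSpace n, ℂ) →ₐ[ℂ] (Lp ℂ p ν →L[ℂ] Lp ℂ p ν))
    (T S : Lp ℂ p ν →L[ℂ] Lp ℂ p ν)
    (hπcontr : ∀ a : C(BSpace n, ℂ), ‖π a‖ ≤ ‖a‖)
    (hT : ‖T‖ ≤ 1) (hS : ‖S‖ ≤ 1)
    (hcov1 : ∀ a : C(BSpace n, ℂ), S * π a * T = π (transfer n ϱ a))
    (hcov2 : ∀ a : C(BSpace n, ℂ), T * π a = π (a.comp (shiftCM n)) * T)
    (hTi : ∀ i : Fin n, ‖TOp n ϱ hϱpos p (fun a => π a) T i‖ ≤ 1)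
    (hSi : ∀ i : Fin n, ‖SOp n ϱ hϱpos p (fun a => π a) S i‖ ≤ 1)
    (hsum : ∑ i : Fin n,
      TOp n ϱ hϱpos p (fun a => π a) T i * SOp n ϱ hϱpos p (fun a => π a) S i = 1)
    :
    ∀ (N : ℕ), 1 ≤ N → ∀ w : Fin N → Fin n,
      (List.ofFn fun k : Fin N => TOp n ϱ hϱpos p (fun a => π a) T (w k)).prod *
        ((List.ofFn fun k : Fin N => SOp n ϱ hϱpos p (fun a => π a) S (w k)).reverse).prod
          = π (cylCM n N w) := by
  have key : ∀ (i : Fin n) (a : C(BSpace n, ℂ)),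
      TOp n ϱ hϱpos p (fun a => π a) T i * π a * SOp n ϱ hϱpos p (fun a => π a) S i
        = π (wInd n i 1 * a.comp (shiftCM n)) := by
    intro i a
    set b := wInd n i 1 * a.comp (shiftCM n) with hb
    have step : ∀ j : Fin n,
        π b * (TOp n ϱ hϱpos p (fun a => π a) T j * SOp n ϱ hϱpos p (fun a => π a) S j)
          = if j = i then
              TOp n ϱ hϱpos p (fun a => π a) T i * π a * SOp n ϱ hϱpos p (fun a => π a) S i
            else 0 := by
      intro j
      simp only [TOp, SOp]
      by_cases hj : j = i
      · subst hj
        rw [if_pos rfl]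
        have hbf : b * wInd n j (rhoPow n ϱ hϱpos (-(1 / p.toReal)))
            = wInd n j (rhoPow n ϱ hϱpos (-(1 / p.toReal))) * a.comp (shiftCM n) := by
          rw [hb, wInd_mul_wInd_self, mul_comm]
        simp only [← mul_assoc]
        rw [← map_mul, hbf, map_mul, mul_assoc (π (wInd n j (rhoPow n ϱ hϱpos (-(1 / p.toReal))))),
          ← hcov2]
        simp only [mul_assoc]
      · rw [if_neg hj]
        have hbf : b * wInd n j (rhoPow n ϱ hϱpos (-(1 / p.toReal))) = 0 := by
          rw [hb]; exact wInd_mul_wInd_ne n i j hj _ _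
        simp only [← mul_assoc]
        rw [← map_mul, hbf, map_zero]
        simp
    calc TOp n ϱ hϱpos p (fun a => π a) T i * π a * SOp n ϱ hϱpos p (fun a => π a) S i
        = ∑ j : Fin n, π b *
            (TOp n ϱ hϱpos p (fun a => π a) T j * SOp n ϱ hϱpos p (fun a => π a) S j) := by
          simp [step]
      _ = π b * ∑ j : Fin n,
            TOp n ϱ hϱpos p (fun a => π a) T j * SOp n ϱ hϱpos p (fun a => π a) S j := by
          rw [Finset.mul_sum]
      _ = π b := by rw [hsum, mul_one]
  suffices H : ∀ (N : ℕ) (w : Fin N → Fin n),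
      (List.ofFn fun k : Fin N => TOp n ϱ hϱpos p (fun a => π a) T (w k)).prod *
        ((List.ofFn fun k : Fin N => SOp n ϱ hϱpos p (fun a => π a) S (w k)).reverse).prod
          = π (cylCM n N w) by
    intro N _ w; exact H N w
  intro N
  induction N with
  | zero =>
    intro w
    rw [cylCM_zero, map_one]
    simp [List.ofFn_zero]
  | succ N ih =>
    intro w
    rw [List.ofFn_succ, List.ofFn_succ, List.prod_cons, List.reverse_cons, List.prod_append,
      List.prod_singleton]
    have hih := ih (fun k => w k.succ)
    calc TOp n ϱ hϱpos p (fun a => π a) T (w 0) *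
          (List.ofFn fun k : Fin N => TOp n ϱ hϱpos p (fun a => π a) T (w k.succ)).prod *
          (((List.ofFn fun k : Fin N => SOp n ϱ hϱpos p (fun a => π a) S (w k.succ)).reverse).prod *
            SOp n ϱ hϱpos p (fun a => π a) S (w 0))
        = TOp n ϱ hϱpos p (fun a => π a) T (w 0) *
            ((List.ofFn fun k : Fin N => TOp n ϱ hϱpos p (fun a => π a) T (w k.succ)).prod *
              ((List.ofFn fun k : Fin N =>
                SOp n ϱ hϱpos p (fun a => π a) S (w k.succ)).reverse).prod) *
            SOp n ϱ hϱpos p (fun a => π a) S (w 0) := by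
          simp only [mul_assoc]
      _ = TOp n ϱ hϱpos p (fun a => π a) T (w 0) * π (cylCM n N fun k => w k.succ) *
            SOp n ϱ hϱpos p (fun a => π a) S (w 0) := by rw [hih]
      _ = π (wInd n (w 0) 1 * (cylCM n N fun k => w k.succ).comp (shiftCM n)) := key (w 0) _
      _ = π (cylCM n (N + 1) w) := by rw [wInd_cyl]


end
end

section
/- For every a ∈ C(X), every N ≥ 1 and every f ∈ L^p_μ(X) one has ∫_X |((π(a)T_φ)^N f)|^p dμ = ∫_X (π(|a|^p)T_φ)^N (|f|^p) dμ, where on the right-hand side π(|a|^p)T_φ : g ↦ |a|^p·(g∘φ) acts on L¹_μ(X). Consequently ‖(π(a)T_φ)^N‖_{B(L^p_μ(X))}^p = ‖(π(|a|^p)T_φ)^N‖_{B(L¹_μ(X))} for every N ≥ 1. -/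
open MeasureTheory
open scoped ENNReal

noncomputable section

/-- For every `a ∈ C(X)`, every `N ≥ 1` and every `f ∈ L^p_μ(X)` one has
`∫_X |((π(a)T_φ)^N f)|^p dμ = ∫_X (π(|a|^p)T_φ)^N (|f|^p) dμ`, where on the right-hand side
`π(|a|^p)T_φ : g ↦ |a|^p·(g∘φ)` acts on `L¹_μ(X)`. Consequently
`‖(π(a)T_φ)^N‖_{B(L^p)}^p = ‖(π(|a|^p)T_φ)^N‖_{B(L¹)}` for every `N ≥ 1`. -/
theorem stmt_13 (n : ℕ) (hn : 2 ≤ n)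
    (ϱ : C(BSpace n, ℝ)) (hϱpos : ∀ x, 0 < ϱ x)
    (hϱsum : ∀ y : BSpace n, ∑ i : Fin n, ϱ (cons n i y) = 1)
    (μ : Measure (BSpace n)) [IsProbabilityMeasure μ]
    (hμ : ∀ a : C(BSpace n, ℂ), ∫ y, transfer n ϱ a y ∂μ = ∫ y, a y ∂μ)
    (p : ℝ≥0∞) [Fact (1 ≤ p)] (hp : p ≠ ∞)
    (a : C(BSpace n, ℂ))
    (A : Lp ℂ p μ →L[ℂ] Lp ℂ p μ)
    (hA : ∀ f : Lp ℂ p μ, (A f : BSpace n → ℂ) =ᵐ[μ] fun x => a x * f (shift n x))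
    (B : Lp ℂ 1 μ →L[ℂ] Lp ℂ 1 μ)
    (hB : ∀ g : Lp ℂ 1 μ,
      (B g : BSpace n → ℂ) =ᵐ[μ] fun x => ((‖a x‖ ^ p.toReal : ℝ) : ℂ) * g (shift n x)) :
    (∀ (N : ℕ), 1 ≤ N → ∀ (f : Lp ℂ p μ) (h : Lp ℂ 1 μ),
      ((h : BSpace n → ℂ) =ᵐ[μ] fun x => ((‖f x‖ ^ p.toReal : ℝ) : ℂ)) →
      ((∫ x, ‖((A ^ N) f : BSpace n → ℂ) x‖ ^ p.toReal ∂μ : ℝ) : ℂ)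
        = ∫ x, ((B ^ N) h : BSpace n → ℂ) x ∂μ) ∧
    (∀ (N : ℕ), 1 ≤ N → ‖A ^ N‖ ^ p.toReal = ‖B ^ N‖) := by
  classical
  have hpz : p ≠ 0 := (lt_of_lt_of_le zero_lt_one (Fact.out : 1 ≤ p)).ne'
  set r := p.toReal with hrdef
  have hr0 : 0 < r := ENNReal.toReal_pos hpz hp
  set S := shift n with hSdef
  have hcont : Continuous S := shift_continuous n
  -- invariance of μ under the shift, via integrals of continuous functions
  have hμint : ∀ g : C(BSpace n, ℝ), ∫ x, g (S x) ∂μ = ∫ x, g x ∂μ := by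
    intro g
    set aC : C(BSpace n, ℂ) := ⟨fun x => (g x : ℂ),
      Complex.continuous_ofReal.comp g.continuous⟩ with haC
    have hkey : transfer n ϱ (aC.comp (shiftCM n)) = aC := by
      ext y
      have hsc : ∀ i : Fin n, shift n (cons n i y) = y := by
        intro i; funext k; rfl
      simp only [transfer, ContinuousMap.coe_mk, ContinuousMap.comp_apply, shiftCM]
      have : ∀ i : Fin n, (ϱ (cons n i y) : ℂ) * aC (shift n (cons n i y))
          = (ϱ (cons n i y) : ℂ) * aC y := by intro i; rw [hsc i]
      rw [Finset.sum_congr rfl (fun i _ => this i), ← Finset.sum_mul]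
      have : (∑ i : Fin n, (ϱ (cons n i y) : ℂ)) = ((∑ i : Fin n, ϱ (cons n i y) : ℝ) : ℂ) := by
        push_cast; ring
      rw [this, hϱsum y]
      simp
    have h1 := hμ (aC.comp (shiftCM n))
    rw [hkey] at h1
    -- h1 : ∫ aC = ∫ aC ∘ shift
    have h2 : ∫ x, ((g (S x) : ℝ) : ℂ) ∂μ = ∫ x, ((g x : ℝ) : ℂ) ∂μ := by
      simpa [haC, shiftCM, Function.comp, ← hSdef] using h1.symm
    have h3a : ∫ x, ((g (S x) : ℝ) : ℂ) ∂μ = ((∫ x, g (S x) ∂μ : ℝ) : ℂ) := integral_ofReal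
    have h3b : ∫ x, ((g x : ℝ) : ℂ) ∂μ = ((∫ x, g x ∂μ : ℝ) : ℂ) := integral_ofReal
    rw [h3a, h3b] at h2
    exact_mod_cast h2
  have hmap : Measure.map S μ = μ := by
    haveI : IsFiniteMeasure (Measure.map S μ) :=
      Measure.isFiniteMeasure_map μ S
    refine ext_of_forall_lintegral_eq_of_IsFiniteMeasure ?_
    intro f
    rw [lintegral_map (f.continuous.measurable.coe_nnreal_ennreal) hcont.measurable]
    have hint1 : Integrable (fun x => ((f (S x)) : ℝ)) μ :=
      BoundedContinuousFunction.integrable_of_nnreal μ (f.compContinuous ⟨S, hcont⟩)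
    have hint2 : Integrable (fun x => ((f x) : ℝ)) μ :=
      BoundedContinuousFunction.integrable_of_nnreal μ f
    rw [lintegral_coe_eq_integral (fun x => f (S x)) hint1,
      lintegral_coe_eq_integral (fun x => f x) hint2]
    congr 1
    exact hμint ⟨fun x => ((f x) : ℝ), NNReal.continuous_coe.comp f.continuous⟩
  have hS : MeasurePreserving S μ μ := ⟨hcont.measurable, hmap⟩
  have hcomp : ∀ (k : ℕ) (u v : BSpace n → ℂ), u =ᵐ[μ] v →
      (fun x => u (S^[k] x)) =ᵐ[μ] fun x => v (S^[k] x) := by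
    intro k u v h
    exact h.comp_tendsto (hS.iterate k).quasiMeasurePreserving.tendsto_ae
  -- iterated a.e. formulas
  have hAiter : ∀ (N : ℕ) (f : Lp ℂ p μ), ((A ^ N) f : BSpace n → ℂ) =ᵐ[μ]
      fun x => (∏ k ∈ Finset.range N, a (S^[k] x)) * f (S^[N] x) := by
    intro N
    induction N with
    | zero =>
      intro f
      simp only [pow_zero, ContinuousLinearMap.one_apply, Finset.range_zero,
        Finset.prod_empty, Function.iterate_zero_apply, one_mul]
      exact Filter.EventuallyEq.rfl
    | succ N ih =>
      intro f
      have h1 : ((A ^ (N + 1)) f : BSpace n → ℂ) = ((A ^ N) (A f) : BSpace n → ℂ) := by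
        rw [pow_succ, ContinuousLinearMap.mul_apply]
      rw [h1]
      have h3 := hcomp N _ _ (hA f)
      refine (ih (A f)).trans ?_
      filter_upwards [h3] with x hx
      rw [hx, Function.iterate_succ_apply', Finset.prod_range_succ]
      ring
  have hBiter : ∀ (N : ℕ) (h : Lp ℂ 1 μ), ((B ^ N) h : BSpace n → ℂ) =ᵐ[μ]
      fun x => (∏ k ∈ Finset.range N, ((‖a (S^[k] x)‖ ^ r : ℝ) : ℂ)) * h (S^[N] x) := by
    intro N
    induction N with
    | zero =>
      intro h
      simp only [pow_zero, ContinuousLinearMap.one_apply, Finset.range_zero,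
        Finset.prod_empty, Function.iterate_zero_apply, one_mul]
      exact Filter.EventuallyEq.rfl
    | succ N ih =>
      intro h
      have h1 : ((B ^ (N + 1)) h : BSpace n → ℂ) = ((B ^ N) (B h) : BSpace n → ℂ) := by
        rw [pow_succ, ContinuousLinearMap.mul_apply]
      rw [h1]
      have h3 := hcomp N _ _ (hB h)
      refine (ih (B h)).trans ?_
      filter_upwards [h3] with x hx
      rw [hx, Function.iterate_succ_apply', Finset.prod_range_succ]
      ring
  -- the real-valued integrand
  set G : ℕ → Lp ℂ p μ → BSpace n → ℝ := fun N f x =>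
    (∏ k ∈ Finset.range N, ‖a (S^[k] x)‖ ^ r) * ‖f (S^[N] x)‖ ^ r with hGdef
  have hGnonneg : ∀ N f x, 0 ≤ G N f x := by
    intro N f x
    apply mul_nonneg
    · exact Finset.prod_nonneg fun i _ => Real.rpow_nonneg (norm_nonneg _) r
    · exact Real.rpow_nonneg (norm_nonneg _) r
  have hAnorm : ∀ (N : ℕ) (f : Lp ℂ p μ),
      (fun x => ‖((A ^ N) f : BSpace n → ℂ) x‖ ^ r) =ᵐ[μ] G N f := by
    intro N f
    filter_upwards [hAiter N f] with x hx
    rw [hx]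
    rw [norm_mul, Real.mul_rpow (norm_nonneg _) (norm_nonneg _), norm_prod,
      ← Real.finset_prod_rpow _ _ (fun i _ => norm_nonneg _) r]
  have hBae : ∀ (N : ℕ) (f : Lp ℂ p μ) (h : Lp ℂ 1 μ),
      ((h : BSpace n → ℂ) =ᵐ[μ] fun x => ((‖f x‖ ^ r : ℝ) : ℂ)) →
      ((B ^ N) h : BSpace n → ℂ) =ᵐ[μ] fun x => ((G N f x : ℝ) : ℂ) := by
    intro N f h hh
    filter_upwards [hBiter N h, hcomp N _ _ hh] with x h1 h2
    rw [h1, h2, hGdef]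
    push_cast
    ring
  -- Lp norm to the r
  have hLpnorm : ∀ f : Lp ℂ p μ, ‖f‖ ^ r = ∫ x, ‖f x‖ ^ r ∂μ := by
    intro f
    have h1 := (Lp.memLp f).eLpNorm_eq_integral_rpow_norm hpz hp
    have hnn : (0:ℝ) ≤ (∫ x, ‖f x‖ ^ r ∂μ) ^ r⁻¹ :=
      Real.rpow_nonneg (integral_nonneg fun x => Real.rpow_nonneg (norm_nonneg _) r) _
    rw [Lp.norm_def, h1, ENNReal.toReal_ofReal hnn,
      ← Real.rpow_mul (integral_nonneg fun x => Real.rpow_nonneg (norm_nonneg _) r),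
      inv_mul_cancel₀ hr0.ne', Real.rpow_one]
  -- master identities
  have hmaster : ∀ (N : ℕ) (f : Lp ℂ p μ) (h : Lp ℂ 1 μ),
      ((h : BSpace n → ℂ) =ᵐ[μ] fun x => ((‖f x‖ ^ r : ℝ) : ℂ)) →
      ‖(B ^ N) h‖ = ‖(A ^ N) f‖ ^ r := by
    intro N f h hh
    have e1 := hBae N f h hh
    have e2 : (fun x => ‖((B ^ N) h : BSpace n → ℂ) x‖) =ᵐ[μ] G N f := by
      filter_upwards [e1] with x hx
      rw [hx, Complex.norm_real, Real.norm_eq_abs, abs_of_nonneg (hGnonneg N f x)]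
    rw [L1.norm_eq_integral_norm, integral_congr_ae e2, hLpnorm,
      integral_congr_ae (hAnorm N f)]
  have hpart1 : ∀ (N : ℕ) (f : Lp ℂ p μ) (h : Lp ℂ 1 μ),
      ((h : BSpace n → ℂ) =ᵐ[μ] fun x => ((‖f x‖ ^ r : ℝ) : ℂ)) →
      ((∫ x, ‖((A ^ N) f : BSpace n → ℂ) x‖ ^ r ∂μ : ℝ) : ℂ)
        = ∫ x, ((B ^ N) h : BSpace n → ℂ) x ∂μ := by
    intro N f h hh
    rw [integral_congr_ae (hBae N f h hh), integral_congr_ae (hAnorm N f)]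
    exact (integral_ofReal).symm
  refine ⟨fun N _ => hpart1 N, fun N _ => ?_⟩
  -- direction ≤ : ‖A^N‖ ^ r ≤ ‖B^N‖
  have hd1 : ∀ f : Lp ℂ p μ, ‖(A ^ N) f‖ ^ r ≤ ‖B ^ N‖ * ‖f‖ ^ r := by
    intro f
    have memh : MemLp (fun x => ((‖f x‖ ^ r : ℝ) : ℂ)) 1 μ :=
      ((Lp.memLp f).norm_rpow hpz hp).ofReal
    set h : Lp ℂ 1 μ := memh.toLp _ with hhdef
    have hh : (h : BSpace n → ℂ) =ᵐ[μ] fun x => ((‖f x‖ ^ r : ℝ) : ℂ) := memh.coeFn_toLp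
    have hnh : ‖h‖ = ‖f‖ ^ r := by
      rw [L1.norm_eq_integral_norm, hLpnorm]
      refine integral_congr_ae ?_
      filter_upwards [hh] with x hx
      rw [hx, Complex.norm_real, Real.norm_eq_abs,
        abs_of_nonneg (Real.rpow_nonneg (norm_nonneg _) r)]
    calc ‖(A ^ N) f‖ ^ r = ‖(B ^ N) h‖ := (hmaster N f h hh).symm
      _ ≤ ‖B ^ N‖ * ‖h‖ := (B ^ N).le_opNorm h
      _ = ‖B ^ N‖ * ‖f‖ ^ r := by rw [hnh]
  have hAle : ‖A ^ N‖ ≤ ‖B ^ N‖ ^ r⁻¹ := by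
    refine (A ^ N).opNorm_le_bound (Real.rpow_nonneg (norm_nonneg _) _) fun f => ?_
    have h1 : ‖(A ^ N) f‖ = (‖(A ^ N) f‖ ^ r) ^ r⁻¹ := by
      rw [← Real.rpow_mul (norm_nonneg _), mul_inv_cancel₀ hr0.ne', Real.rpow_one]
    rw [h1]
    calc (‖(A ^ N) f‖ ^ r) ^ r⁻¹ ≤ (‖B ^ N‖ * ‖f‖ ^ r) ^ r⁻¹ :=
        Real.rpow_le_rpow (Real.rpow_nonneg (norm_nonneg _) r) (hd1 f) (inv_nonneg.mpr hr0.le)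
      _ = ‖B ^ N‖ ^ r⁻¹ * ‖f‖ := by
        rw [Real.mul_rpow (norm_nonneg _) (Real.rpow_nonneg (norm_nonneg _) r),
          ← Real.rpow_mul (norm_nonneg _), mul_inv_cancel₀ hr0.ne', Real.rpow_one]
  have hANr : ‖A ^ N‖ ^ r ≤ ‖B ^ N‖ := by
    calc ‖A ^ N‖ ^ r ≤ (‖B ^ N‖ ^ r⁻¹) ^ r :=
        Real.rpow_le_rpow (norm_nonneg _) hAle hr0.le
      _ = ‖B ^ N‖ := by
        rw [← Real.rpow_mul (norm_nonneg _), inv_mul_cancel₀ hr0.ne', Real.rpow_one]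
  -- direction ≥ : ‖B^N‖ ≤ ‖A^N‖ ^ r
  have hd2 : ∀ h : Lp ℂ 1 μ, ‖(B ^ N) h‖ ≤ ‖A ^ N‖ ^ r * ‖h‖ := by
    intro h
    have hq0 : (p⁻¹ : ℝ≥0∞) ≠ 0 := ENNReal.inv_ne_zero.mpr hp
    have hqt : (p⁻¹ : ℝ≥0∞) ≠ ∞ := ENNReal.inv_ne_top.mpr hpz
    have step2 : MemLp (fun x => ‖(h : BSpace n → ℂ) x‖ ^ (p⁻¹).toReal) (1 / p⁻¹) μ :=
      (memLp_norm_rpow_iff (Lp.aestronglyMeasurable h) hq0 hqt).mpr (Lp.memLp h)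
    have hexp : (1 : ℝ≥0∞) / p⁻¹ = p := by rw [one_div, inv_inv]
    have hexp2 : (p⁻¹ : ℝ≥0∞).toReal = r⁻¹ := by rw [ENNReal.toReal_inv]
    rw [hexp, hexp2] at step2
    have memf : MemLp (fun x => ((‖(h : BSpace n → ℂ) x‖ ^ r⁻¹ : ℝ) : ℂ)) p μ := step2.ofReal
    set f : Lp ℂ p μ := memf.toLp _ with hfdef
    have hff : (f : BSpace n → ℂ) =ᵐ[μ] fun x => ((‖(h : BSpace n → ℂ) x‖ ^ r⁻¹ : ℝ) : ℂ) :=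
      memf.coeFn_toLp
    have hhf : (fun x => ((‖(f : BSpace n → ℂ) x‖ ^ r : ℝ) : ℂ))
        =ᵐ[μ] fun x => ((‖(h : BSpace n → ℂ) x‖ : ℝ) : ℂ) := by
      filter_upwards [hff] with x hx
      rw [hx, Complex.norm_real, Real.norm_eq_abs,
        abs_of_nonneg (Real.rpow_nonneg (norm_nonneg _) _),
        ← Real.rpow_mul (norm_nonneg _), inv_mul_cancel₀ hr0.ne', Real.rpow_one]
    have memh' : MemLp (fun x => ((‖(h : BSpace n → ℂ) x‖ : ℝ) : ℂ)) 1 μ :=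
      memLp_one_iff_integrable.mpr (L1.integrable_coeFn h).norm.ofReal
    set h' : Lp ℂ 1 μ := memh'.toLp _ with hh'def
    have hh' : (h' : BSpace n → ℂ) =ᵐ[μ] fun x => ((‖(f : BSpace n → ℂ) x‖ ^ r : ℝ) : ℂ) :=
      memh'.coeFn_toLp.trans hhf.symm
    have hBB : ‖(B ^ N) h‖ = ‖(B ^ N) h'‖ := by
      rw [L1.norm_eq_integral_norm, L1.norm_eq_integral_norm]
      refine integral_congr_ae ?_
      filter_upwards [hBiter N h, hBiter N h', hcomp N _ _ memh'.coeFn_toLp]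
        with x h1 h2 h3
      rw [h1, h2, h3, norm_mul, norm_mul, Complex.norm_real, norm_norm]
    have hfh : ‖f‖ ^ r = ‖h‖ := by
      rw [hLpnorm, L1.norm_eq_integral_norm]
      refine integral_congr_ae ?_
      filter_upwards [hhf] with x hx
      exact_mod_cast hx
    calc ‖(B ^ N) h‖ = ‖(B ^ N) h'‖ := hBB
      _ = ‖(A ^ N) f‖ ^ r := hmaster N f h' hh'
      _ ≤ (‖A ^ N‖ * ‖f‖) ^ r :=
        Real.rpow_le_rpow (norm_nonneg _) ((A ^ N).le_opNorm f) hr0.le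
      _ = ‖A ^ N‖ ^ r * ‖f‖ ^ r := Real.mul_rpow (norm_nonneg _) (norm_nonneg _)
      _ = ‖A ^ N‖ ^ r * ‖h‖ := by rw [hfh]
  have hBle : ‖B ^ N‖ ≤ ‖A ^ N‖ ^ r :=
    (B ^ N).opNorm_le_bound (Real.rpow_nonneg (norm_nonneg _) _) hd2
  exact le_antisymm hANr hBle

end
end

section
/- For every a ∈ C(X), the spectral radius of π(a)T_φ : f ↦ a·(f∘φ) acting on L^p_μ(X) and the spectral radius of π(|a|^p)T_φ : g ↦ |a|^p·(g∘φ) acting on L¹_μ(X) are related by r_{B(L^p_μ(X))}(π(a)T_φ)^p = r_{B(L¹_μ(X))}(π(|a|^p)T_φ). -/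
open MeasureTheory
open scoped ENNReal

noncomputable section

namespace St14

lemma shift_cons' (n : ℕ) (i : Fin n) (y : BSpace n) : shift n (cons n i y) = y :=
  funext fun _ => rfl

lemma map_shift_eq (n : ℕ) (ϱ : C(BSpace n, ℝ))
    (hϱsum : ∀ y : BSpace n, ∑ i : Fin n, ϱ (cons n i y) = 1)
    (μ : Measure (BSpace n)) [IsProbabilityMeasure μ]
    (hμ : ∀ a : C(BSpace n, ℂ), ∫ y, transfer n ϱ a y ∂μ = ∫ y, a y ∂μ) :
    μ.map (shift n) = μ := by
  have hint : ∀ c : C(BSpace n, ℂ), ∫ x, c (shift n x) ∂μ = ∫ x, c x ∂μ := by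
    intro c
    have h2 : transfer n ϱ (c.comp (shiftCM n)) = c := by
      ext y
      simp only [transfer, ContinuousMap.coe_mk, ContinuousMap.comp_apply, shiftCM,
        shift_cons']
      rw [← Finset.sum_mul, ← Complex.ofReal_sum, hϱsum y]
      simp
    have h1 := hμ (c.comp (shiftCM n))
    rw [h2] at h1
    simpa [shiftCM] using h1.symm
  have : IsProbabilityMeasure (μ.map (shift n)) :=
    Measure.isProbabilityMeasure_map (shift_continuous n).measurable.aemeasurable
  refine ext_of_forall_lintegral_eq_of_IsFiniteMeasure (fun f => ?_)
  rw [lintegral_map (f.measurable_coe_ennreal_comp) (shift_continuous n).measurable]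
  have hfin1 : (∫⁻ x, (f (shift n x) : ℝ≥0∞) ∂μ) ≠ ∞ := by
    have := BoundedContinuousFunction.lintegral_lt_top_of_nnreal μ
      (f.compContinuous (shiftCM n))
    simpa [shiftCM] using this.ne
  have hfin2 : (∫⁻ x, (f x : ℝ≥0∞) ∂μ) ≠ ∞ :=
    (BoundedContinuousFunction.lintegral_lt_top_of_nnreal μ f).ne
  rw [← ENNReal.toReal_eq_toReal_iff' hfin1 hfin2]
  have e1 := BoundedContinuousFunction.toReal_lintegral_coe_eq_integral
    (f.compContinuous (shiftCM n)) μ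
  have e2 := BoundedContinuousFunction.toReal_lintegral_coe_eq_integral f μ
  simp only [BoundedContinuousFunction.compContinuous_apply, shiftCM,
    ContinuousMap.coe_mk] at e1
  rw [e1, e2]
  have hc := hint ⟨fun x => ((f x : ℝ) : ℂ), Complex.continuous_ofReal.comp
    (NNReal.continuous_coe.comp f.continuous)⟩
  simp only [ContinuousMap.coe_mk] at hc
  have h1 : ∫ x, ((f (shift n x) : ℝ) : ℂ) ∂μ = ((∫ x, (f (shift n x) : ℝ) ∂μ : ℝ) : ℂ) :=
    integral_ofReal
  have h2 : ∫ x, ((f x : ℝ) : ℂ) ∂μ = ((∫ x, (f x : ℝ) ∂μ : ℝ) : ℂ) := integral_ofReal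
  rw [h1, h2] at hc
  exact_mod_cast hc

lemma nnnorm_coe_rpow (z : ℂ) {c : ℝ} (hc : 0 ≤ c) :
    (‖((‖z‖ ^ c : ℝ) : ℂ)‖₊ : ℝ≥0∞) = (‖z‖₊ : ℝ≥0∞) ^ c := by
  rw [← ENNReal.coe_rpow_of_nonneg _ hc]
  norm_cast
  rw [← nnnorm_norm z, ← Real.nnnorm_rpow_of_nonneg (norm_nonneg z)]

end St14


/-- For every `a ∈ C(X)`, the spectral radius of `π(a)T_φ : f ↦ a·(f∘φ)`
on `L^p_μ(X)` and the spectral radius of `π(|a|^p)T_φ : g ↦ |a|^p·(g∘φ)` on `L¹_μ(X)` are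
related by `r_{B(L^p)}(π(a)T_φ)^p = r_{B(L¹)}(π(|a|^p)T_φ)`. -/
theorem stmt_14 (n : ℕ) (hn : 2 ≤ n)
    (ϱ : C(BSpace n, ℝ)) (hϱpos : ∀ x, 0 < ϱ x)
    (hϱsum : ∀ y : BSpace n, ∑ i : Fin n, ϱ (cons n i y) = 1)
    (μ : Measure (BSpace n)) [IsProbabilityMeasure μ]
    (hμ : ∀ a : C(BSpace n, ℂ), ∫ y, transfer n ϱ a y ∂μ = ∫ y, a y ∂μ)
    (p : ℝ≥0∞) [Fact (1 ≤ p)] (hp : p ≠ ∞)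
    (a : C(BSpace n, ℂ))
    (A : Lp ℂ p μ →L[ℂ] Lp ℂ p μ)
    (hA : ∀ f : Lp ℂ p μ, (A f : BSpace n → ℂ) =ᵐ[μ] fun x => a x * f (shift n x))
    (B : Lp ℂ 1 μ →L[ℂ] Lp ℂ 1 μ)
    (hB : ∀ g : Lp ℂ 1 μ,
      (B g : BSpace n → ℂ) =ᵐ[μ] fun x => ((‖a x‖ ^ p.toReal : ℝ) : ℂ) * g (shift n x)) :
    spectralRadius ℂ A ^ p.toReal = spectralRadius ℂ B := by
  classical
  have hp1 : (1 : ℝ≥0∞) ≤ p := Fact.out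
  set pR := p.toReal with hpRdef
  have hpR1 : 1 ≤ pR := by
    rw [hpRdef, ← ENNReal.toReal_one]
    exact ENNReal.toReal_mono hp hp1
  have hpR0 : 0 < pR := lt_of_lt_of_le one_pos hpR1
  have hp0 : p ≠ 0 := (lt_of_lt_of_le one_pos hp1).ne'
  set φ := shift n with hφdef
  have hφm : Measurable φ := (shift_continuous n).measurable
  have hmap : μ.map φ = μ := St14.map_shift_eq n ϱ hϱsum μ hμ
  have hmapN : ∀ N : ℕ, μ.map (φ^[N]) = μ := by
    intro N
    induction N with
    | zero => simpa using Measure.map_id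
    | succ N ih =>
      rw [Function.iterate_succ, ← Measure.map_map (hφm.iterate N) hφm, hmap, ih]
  have hcomp : ∀ (N : ℕ) {u v : BSpace n → ℂ}, u =ᵐ[μ] v →
      (fun x => u (φ^[N] x)) =ᵐ[μ] (fun x => v (φ^[N] x)) := by
    intro N u v huv
    have huv' : u =ᵐ[μ.map (φ^[N])] v := by rw [hmapN N]; exact huv
    exact ae_eq_comp (f := φ^[N]) ((hφm.iterate N).aemeasurable) huv'
  set w : ℕ → BSpace n → ℂ := fun N x => ∏ k ∈ Finset.range N, a (φ^[k] x) with hwdef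
  -- iterates of A
  have hAN : ∀ (N : ℕ) (f : Lp ℂ p μ),
      (((A ^ N) f : Lp ℂ p μ) : BSpace n → ℂ) =ᵐ[μ]
        fun x => w N x * (f : BSpace n → ℂ) (φ^[N] x) := by
    intro N
    induction N with
    | zero =>
      intro f
      have h0 : (A ^ 0) f = f := by rw [pow_zero]; rfl
      rw [h0]
      filter_upwards with x
      simp [hwdef]
    | succ N ih =>
      intro f
      have h1 : (A ^ (N + 1)) f = (A ^ N) (A f) := by
        rw [pow_succ, ContinuousLinearMap.mul_apply]
      rw [h1]
      refine (ih (A f)).trans ?_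
      filter_upwards [hcomp N (hA f)] with x hx
      rw [hx, Function.iterate_succ_apply']
      simp only [hwdef, Finset.prod_range_succ]
      ring
  -- iterates of B
  have hBN : ∀ (N : ℕ) (g : Lp ℂ 1 μ),
      (((B ^ N) g : Lp ℂ 1 μ) : BSpace n → ℂ) =ᵐ[μ]
        fun x => ((‖w N x‖ ^ pR : ℝ) : ℂ) * (g : BSpace n → ℂ) (φ^[N] x) := by
    intro N
    induction N with
    | zero =>
      intro g
      have h0 : (B ^ 0) g = g := by rw [pow_zero]; rfl
      rw [h0]
      filter_upwards with x
      simp [hwdef, Real.one_rpow]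
    | succ N ih =>
      intro g
      have h1 : (B ^ (N + 1)) g = (B ^ N) (B g) := by
        rw [pow_succ, ContinuousLinearMap.mul_apply]
      rw [h1]
      refine (ih (B g)).trans ?_
      filter_upwards [hcomp N (hB g)] with x hx
      rw [hx, Function.iterate_succ_apply']
      have hnorm : ‖w N x‖ ^ pR * ‖a (φ^[N] x)‖ ^ pR = ‖w (N + 1) x‖ ^ pR := by
        rw [← Real.mul_rpow (norm_nonneg _) (norm_nonneg _), ← norm_mul]
        simp only [hwdef, Finset.prod_range_succ]
      calc ((‖w N x‖ ^ pR : ℝ) : ℂ) * (((‖a (φ^[N] x)‖ ^ pR : ℝ) : ℂ) *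
              (g : BSpace n → ℂ) (φ (φ^[N] x)))
          = (((‖w N x‖ ^ pR * ‖a (φ^[N] x)‖ ^ pR : ℝ)) : ℂ) *
              (g : BSpace n → ℂ) (φ (φ^[N] x)) := by push_cast; ring
        _ = _ := by rw [hnorm]
  -- lintegral formula for A-iterates
  have hAnorm : ∀ (N : ℕ) (f : Lp ℂ p μ),
      eLpNorm (((A ^ N) f : Lp ℂ p μ) : BSpace n → ℂ) p μ ^ pR
        = ∫⁻ x, (‖w N x‖₊ : ℝ≥0∞) ^ pR *
            (‖(f : BSpace n → ℂ) (φ^[N] x)‖₊ : ℝ≥0∞) ^ pR ∂μ := by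
    intro N f
    rw [eLpNorm_congr_ae (hAN N f), eLpNorm_eq_lintegral_rpow_enorm_toReal hp0 hp,
      ← ENNReal.rpow_mul, one_div, inv_mul_cancel₀ hpR0.ne', ENNReal.rpow_one]
    refine lintegral_congr fun x => ?_
    rw [enorm_eq_nnnorm, nnnorm_mul, ENNReal.coe_mul, ENNReal.mul_rpow_of_nonneg _ _ hpR0.le]
  -- lintegral formula for B-iterates
  have hBnorm : ∀ (N : ℕ) (g : Lp ℂ 1 μ),
      eLpNorm (((B ^ N) g : Lp ℂ 1 μ) : BSpace n → ℂ) 1 μ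
        = ∫⁻ x, (‖w N x‖₊ : ℝ≥0∞) ^ pR *
            (‖(g : BSpace n → ℂ) (φ^[N] x)‖₊ : ℝ≥0∞) ∂μ := by
    intro N g
    rw [eLpNorm_congr_ae (hBN N g), eLpNorm_one_eq_lintegral_enorm]
    refine lintegral_congr fun x => ?_
    rw [enorm_eq_nnnorm, nnnorm_mul, ENNReal.coe_mul, St14.nnnorm_coe_rpow _ hpR0.le]
  -- the auxiliary L¹ element attached to f ∈ Lᵖ
  have hmemF : ∀ f : Lp ℂ p μ,
      MemLp (fun x => ((‖(f : BSpace n → ℂ) x‖ ^ pR : ℝ) : ℂ)) 1 μ := by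
    intro f
    have ham : AEStronglyMeasurable
        (fun x => ((‖(f : BSpace n → ℂ) x‖ ^ pR : ℝ) : ℂ)) μ :=
      (Complex.measurable_ofReal.comp_aemeasurable
        ((Real.continuous_rpow_const hpR0.le).measurable.comp_aemeasurable
          (Lp.aestronglyMeasurable f).aemeasurable.norm)).aestronglyMeasurable
    refine ⟨ham, ?_⟩
    rw [eLpNorm_one_eq_lintegral_enorm]
    have hlin : ∫⁻ x, (‖((‖(f : BSpace n → ℂ) x‖ ^ pR : ℝ) : ℂ)‖₊ : ℝ≥0∞) ∂μ
        = eLpNorm (f : BSpace n → ℂ) p μ ^ pR := by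
      rw [eLpNorm_eq_lintegral_rpow_enorm_toReal hp0 hp, ← ENNReal.rpow_mul, one_div,
        inv_mul_cancel₀ hpR0.ne', ENNReal.rpow_one]
      exact lintegral_congr fun x => St14.nnnorm_coe_rpow _ hpR0.le
    simp only [enorm_eq_nnnorm]
    rw [hlin]
    exact ENNReal.rpow_lt_top_of_nonneg hpR0.le (Lp.eLpNorm_ne_top f)
  have heLpF : ∀ f : Lp ℂ p μ,
      eLpNorm (fun x => ((‖(f : BSpace n → ℂ) x‖ ^ pR : ℝ) : ℂ)) 1 μ
        = eLpNorm (f : BSpace n → ℂ) p μ ^ pR := by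
    intro f
    rw [eLpNorm_one_eq_lintegral_enorm, eLpNorm_eq_lintegral_rpow_enorm_toReal hp0 hp,
      ← ENNReal.rpow_mul, one_div, inv_mul_cancel₀ hpR0.ne', ENNReal.rpow_one]
    exact lintegral_congr fun x => St14.nnnorm_coe_rpow _ hpR0.le
  -- the auxiliary Lᵖ element attached to g ∈ L¹
  have hmemG : ∀ g : Lp ℂ 1 μ,
      MemLp (fun x => ((‖(g : BSpace n → ℂ) x‖ ^ pR⁻¹ : ℝ) : ℂ)) p μ := by
    intro g
    have ham : AEStronglyMeasurable
        (fun x => ((‖(g : BSpace n → ℂ) x‖ ^ pR⁻¹ : ℝ) : ℂ)) μ :=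
      (Complex.measurable_ofReal.comp_aemeasurable
        ((Real.continuous_rpow_const (inv_nonneg.mpr hpR0.le)).measurable.comp_aemeasurable
          (Lp.aestronglyMeasurable g).aemeasurable.norm)).aestronglyMeasurable
    refine ⟨ham, ?_⟩
    rw [eLpNorm_eq_lintegral_rpow_enorm_toReal hp0 hp]
    have hlin : ∫⁻ x, (‖((‖(g : BSpace n → ℂ) x‖ ^ pR⁻¹ : ℝ) : ℂ)‖₊ : ℝ≥0∞) ^ pR ∂μ
        = ∫⁻ x, (‖(g : BSpace n → ℂ) x‖₊ : ℝ≥0∞) ∂μ := by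
      refine lintegral_congr fun x => ?_
      rw [St14.nnnorm_coe_rpow _ (inv_nonneg.mpr hpR0.le), ← ENNReal.rpow_mul,
        inv_mul_cancel₀ hpR0.ne', ENNReal.rpow_one]
    simp only [enorm_eq_nnnorm]
    rw [hlin]
    have : (∫⁻ x, (‖(g : BSpace n → ℂ) x‖₊ : ℝ≥0∞) ∂μ) < ∞ := by
      simp only [← enorm_eq_nnnorm]
      rw [← eLpNorm_one_eq_lintegral_enorm]
      exact Lp.eLpNorm_lt_top g
    exact ENNReal.rpow_lt_top_of_nonneg (by positivity) this.ne
  have heLpG : ∀ g : Lp ℂ 1 μ,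
      eLpNorm (fun x => ((‖(g : BSpace n → ℂ) x‖ ^ pR⁻¹ : ℝ) : ℂ)) p μ
        = eLpNorm (g : BSpace n → ℂ) 1 μ ^ (1 / pR) := by
    intro g
    rw [eLpNorm_eq_lintegral_rpow_enorm_toReal hp0 hp, eLpNorm_one_eq_lintegral_enorm]
    congr 1
    refine lintegral_congr fun x => ?_
    simp only [enorm_eq_nnnorm]
    rw [St14.nnnorm_coe_rpow _ (inv_nonneg.mpr hpR0.le), ← ENNReal.rpow_mul,
      inv_mul_cancel₀ hpR0.ne', ENNReal.rpow_one]
  -- key norm identity, direction 1 : ‖Aᴺ f‖ᵖ = ‖Bᴺ (gOf f)‖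
  have hABf : ∀ (N : ℕ) (f : Lp ℂ p μ),
      ‖(A ^ N) f‖ ^ pR = ‖(B ^ N) ((hmemF f).toLp _)‖ := by
    intro N f
    rw [Lp.norm_def, Lp.norm_def, ENNReal.toReal_rpow, hAnorm N f, hBnorm N _]
    congr 1
    refine lintegral_congr_ae ?_
    filter_upwards [hcomp N ((hmemF f).coeFn_toLp)] with x hx
    rw [hx, St14.nnnorm_coe_rpow _ hpR0.le]
  -- key norm identity, direction 2 : ‖Bᴺ g‖ = ‖Aᴺ (fOf g)‖ᵖ
  have hBAg : ∀ (N : ℕ) (g : Lp ℂ 1 μ),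
      ‖(B ^ N) g‖ = ‖(A ^ N) ((hmemG g).toLp _)‖ ^ pR := by
    intro N g
    rw [Lp.norm_def, Lp.norm_def, ENNReal.toReal_rpow, hAnorm N _, hBnorm N g]
    congr 1
    refine lintegral_congr_ae ?_
    filter_upwards [hcomp N ((hmemG g).coeFn_toLp)] with x hx
    rw [hx, St14.nnnorm_coe_rpow _ (inv_nonneg.mpr hpR0.le), ← ENNReal.rpow_mul,
      inv_mul_cancel₀ hpR0.ne', ENNReal.rpow_one]
  -- norms of the auxiliary elements
  have hgnorm : ∀ f : Lp ℂ p μ, ‖((hmemF f).toLp _ : Lp ℂ 1 μ)‖ = ‖f‖ ^ pR := by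
    intro f
    rw [Lp.norm_def, eLpNorm_congr_ae ((hmemF f).coeFn_toLp), heLpF f, Lp.norm_def,
      ENNReal.toReal_rpow]
  have hfnorm : ∀ g : Lp ℂ 1 μ, ‖((hmemG g).toLp _ : Lp ℂ p μ)‖ ^ pR = ‖g‖ := by
    intro g
    rw [Lp.norm_def, eLpNorm_congr_ae ((hmemG g).coeFn_toLp), heLpG g, Lp.norm_def,
      ENNReal.toReal_rpow, ← ENNReal.rpow_mul, one_div, inv_mul_cancel₀ hpR0.ne',
      ENNReal.rpow_one]
  -- operator norm comparison
  have keyN : ∀ N : ℕ, ‖A ^ N‖ ^ pR = ‖B ^ N‖ := by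
    intro N
    have hle1 : ‖B ^ N‖ ≤ ‖A ^ N‖ ^ pR := by
      refine ContinuousLinearMap.opNorm_le_bound _
        (Real.rpow_nonneg (norm_nonneg _) _) fun g => ?_
      rw [hBAg N g, ← hfnorm g, ← Real.mul_rpow (norm_nonneg _) (norm_nonneg _)]
      exact Real.rpow_le_rpow (norm_nonneg _)
        ((A ^ N).le_opNorm _) hpR0.le
    have hle2 : ‖A ^ N‖ ^ pR ≤ ‖B ^ N‖ := by
      have h : ‖A ^ N‖ ≤ ‖B ^ N‖ ^ pR⁻¹ := by
        refine ContinuousLinearMap.opNorm_le_bound _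
          (Real.rpow_nonneg (norm_nonneg _) _) fun f => ?_
        have h1 : ‖(A ^ N) f‖ ^ pR ≤ ‖B ^ N‖ * ‖f‖ ^ pR := by
          rw [hABf N f, ← hgnorm f]
          exact (B ^ N).le_opNorm _
        have h2 := Real.rpow_le_rpow (by positivity) h1 (inv_nonneg.mpr hpR0.le)
        rwa [Real.rpow_rpow_inv (norm_nonneg _) hpR0.ne',
          Real.mul_rpow (norm_nonneg _) (Real.rpow_nonneg (norm_nonneg _) _),
          Real.rpow_rpow_inv (norm_nonneg _) hpR0.ne'] at h2
      calc ‖A ^ N‖ ^ pR ≤ (‖B ^ N‖ ^ pR⁻¹) ^ pR :=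
            Real.rpow_le_rpow (norm_nonneg _) h hpR0.le
        _ = ‖B ^ N‖ := Real.rpow_inv_rpow (norm_nonneg _) hpR0.ne'
    exact le_antisymm hle2 hle1
  -- Gelfand's formula
  have hGA := spectrum.pow_nnnorm_pow_one_div_tendsto_nhds_spectralRadius A
  have hGB := spectrum.pow_nnnorm_pow_one_div_tendsto_nhds_spectralRadius B
  have hGA' : Filter.Tendsto
      (fun N : ℕ => ((‖A ^ N‖₊ : ℝ≥0∞) ^ (1 / (N : ℝ))) ^ pR) Filter.atTop
      (nhds (spectralRadius ℂ A ^ pR)) := by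
    have hcont : Continuous (fun x : ℝ≥0∞ => x ^ pR) := ENNReal.continuous_rpow_const
    exact (hcont.tendsto _).comp hGA
  have heq : ∀ N : ℕ, ((‖A ^ N‖₊ : ℝ≥0∞) ^ (1 / (N : ℝ))) ^ pR
      = (‖B ^ N‖₊ : ℝ≥0∞) ^ (1 / (N : ℝ)) := by
    intro N
    have h2 : (‖A ^ N‖₊ ^ pR : NNReal) = ‖B ^ N‖₊ := by
      apply NNReal.coe_injective
      rw [NNReal.coe_rpow, coe_nnnorm, coe_nnnorm]
      exact keyN N
    have hkey : (‖A ^ N‖₊ : ℝ≥0∞) ^ pR = (‖B ^ N‖₊ : ℝ≥0∞) := by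
      rw [← ENNReal.coe_rpow_of_nonneg _ hpR0.le, h2]
    rw [← ENNReal.rpow_mul, mul_comm, ENNReal.rpow_mul, hkey]
  simp only [heq] at hGA'
  exact tendsto_nhds_unique hGA' hGB


end
end

section
/- Let w ∈ C(X) with w ≥ 0. Then the spectral radius of the weighted composition operator π(w)T_φ : g ↦ w·(g∘φ) acting on L¹_μ(X) equals the spectral radius of the weighted transfer operator L_w : C(X) → C(X), L_w(b) := L(w·b), acting on the Banach space C(X) with the supremum norm: r_{B(L¹_μ(X))}(π(w)T_φ) = r_{B(C(X))}(L_w). -/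
open MeasureTheory
open scoped ENNReal

noncomputable section

namespace Stmt15

open scoped NNReal

lemma shift_cons {n : ℕ} (i : Fin n) (y : BSpace n) : shift n (cons n i y) = y := by
  funext k; rfl

/-- real transfer operator -/
def transferR (n : ℕ) (ϱ : C(BSpace n, ℝ)) (a : C(BSpace n, ℝ)) : C(BSpace n, ℝ) :=
  ⟨fun y => ∑ i : Fin n, ϱ (cons n i y) * a (cons n i y), by
    refine continuous_finset_sum _ fun i _ => ?_
    exact (ϱ.continuous.comp (cons_continuous n i)).mul (a.continuous.comp (cons_continuous n i))⟩

lemma transferR_apply {n : ℕ} (ϱ a : C(BSpace n, ℝ)) (y : BSpace n) :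
    transferR n ϱ a y = ∑ i : Fin n, ϱ (cons n i y) * a (cons n i y) := rfl

variable {n : ℕ} (ϱ : C(BSpace n, ℝ)) (μ : Measure (BSpace n)) [IsProbabilityMeasure μ]

lemma integrable_cm (f : C(BSpace n, ℝ)) : Integrable f μ :=
  f.continuous.integrable_of_hasCompactSupport (HasCompactSupport.of_compactSpace _)

lemma integral_real_eq (hμ : ∀ a : C(BSpace n, ℂ), ∫ y, transfer n ϱ a y ∂μ = ∫ y, a y ∂μ)
    (a : C(BSpace n, ℝ)) : ∫ y, transferR n ϱ a y ∂μ = ∫ y, a y ∂μ := by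
  have h := hμ ⟨fun x => (a x : ℂ), Complex.continuous_ofReal.comp a.continuous⟩
  have h2 : ∀ y, transfer n ϱ ⟨fun x => (a x : ℂ), Complex.continuous_ofReal.comp a.continuous⟩ y
      = ((transferR n ϱ a y : ℝ) : ℂ) := by
    intro y
    simp only [transfer, transferR, ContinuousMap.coe_mk]
    push_cast
    rfl
  simp only [h2, ContinuousMap.coe_mk] at h
  have h1 : ∀ g : BSpace n → ℝ, ∫ x, ((g x : ℝ) : ℂ) ∂μ = ((∫ x, g x ∂μ : ℝ) : ℂ) :=
    fun g => integral_ofReal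
  rw [h1, h1] at h
  exact_mod_cast h

/-- The key measure identity: pushing forward `a·μ` under the shift gives `L(a)·μ`. -/
lemma map_withDensity (hϱ : ∀ x, 0 ≤ ϱ x)
    (hμ : ∀ a : C(BSpace n, ℂ), ∫ y, transfer n ϱ a y ∂μ = ∫ y, a y ∂μ)
    (a : C(BSpace n, ℝ)) (ha : ∀ x, 0 ≤ a x) :
    Measure.map (shift n) (μ.withDensity fun x => ENNReal.ofReal (a x))
      = μ.withDensity fun y => ENNReal.ofReal (transferR n ϱ a y) := by
  have hma : Measurable fun x => ENNReal.ofReal (a x) :=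
    (ENNReal.measurable_ofReal.comp a.continuous.measurable)
  have hmLa : Measurable fun y => ENNReal.ofReal (transferR n ϱ a y) :=
    (ENNReal.measurable_ofReal.comp (transferR n ϱ a).continuous.measurable)
  have hfin : ∀ (b : C(BSpace n, ℝ)), IsFiniteMeasure (μ.withDensity fun x => ENNReal.ofReal (b x)) := by
    intro b
    refine isFiniteMeasure_withDensity (ne_of_lt ?_)
    calc ∫⁻ x, ENNReal.ofReal (b x) ∂μ ≤ ∫⁻ _, ENNReal.ofReal ‖b‖ ∂μ := by
          refine lintegral_mono fun x => ENNReal.ofReal_le_ofReal ?_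
          exact (Real.le_norm_self _).trans (b.norm_coe_le_norm x)
      _ < ∞ := by simp [lintegral_const]
  haveI := hfin a
  haveI := hfin (transferR n ϱ a)
  haveI : IsFiniteMeasure (Measure.map (shift n) (μ.withDensity fun x => ENNReal.ofReal (a x))) :=
    Measure.isFiniteMeasure_map _ _
  refine ext_of_forall_lintegral_eq_of_IsFiniteMeasure ?_
  intro f
  have hfm : Measurable fun x => ((f x : ℝ≥0) : ℝ≥0∞) :=
    measurable_coe_nnreal_ennreal.comp f.continuous.measurable
  have hfm2 : Measurable fun x => ((f (shift n x) : ℝ≥0) : ℝ≥0∞) :=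
    hfm.comp (shift_continuous n).measurable
  rw [lintegral_map hfm (shift_continuous n).measurable,
    lintegral_withDensity_eq_lintegral_mul μ hma hfm2,
    lintegral_withDensity_eq_lintegral_mul μ hmLa hfm]
  -- now equate the two lintegrals over μ
  have key : ∫ x, a x * (f (shift n x) : ℝ) ∂μ = ∫ y, transferR n ϱ a y * (f y : ℝ) ∂μ := by
    set g : C(BSpace n, ℝ) := ⟨fun x => a x * (f (shift n x) : ℝ),
      (a.continuous.mul ((NNReal.continuous_coe.comp f.continuous).comp (shift_continuous n)))⟩
    have hg := integral_real_eq ϱ μ hμ g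
    have h2 : ∀ y, transferR n ϱ g y = transferR n ϱ a y * (f y : ℝ) := by
      intro y
      simp only [transferR, ContinuousMap.coe_mk, g, shift_cons, Finset.sum_mul, mul_assoc]
    simp only [g, ContinuousMap.coe_mk] at hg
    rw [← hg]
    exact integral_congr_ae (Filter.EventuallyEq.of_eq (funext h2))
  have i1 : Integrable (fun x => a x * (f (shift n x) : ℝ)) μ :=
    integrable_cm μ ⟨_, (a.continuous.mul ((NNReal.continuous_coe.comp f.continuous).comp (shift_continuous n)))⟩
  have i2 : Integrable (fun y => transferR n ϱ a y * (f y : ℝ)) μ :=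
    integrable_cm μ ⟨_, ((transferR n ϱ a).continuous.mul (NNReal.continuous_coe.comp f.continuous))⟩
  have e1 : ∫⁻ x, ((fun x => ENNReal.ofReal (a x)) * fun x => ((f (shift n x) : ℝ≥0) : ℝ≥0∞)) x ∂μ
      = ENNReal.ofReal (∫ x, a x * (f (shift n x) : ℝ) ∂μ) := by
    rw [ofReal_integral_eq_lintegral_ofReal i1
      (Filter.Eventually.of_forall fun x => mul_nonneg (ha x) (f (shift n x)).2)]
    refine lintegral_congr fun x => ?_
    simp [ENNReal.ofReal_mul (ha x), ENNReal.ofReal_coe_nnreal]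
  have hLa : ∀ y, 0 ≤ transferR n ϱ a y := fun y => by
    rw [transferR_apply]
    exact Finset.sum_nonneg fun i _ => mul_nonneg (hϱ _) (ha _)
  have e2 : ∫⁻ y, ((fun y => ENNReal.ofReal (transferR n ϱ a y)) * fun y => ((f y : ℝ≥0) : ℝ≥0∞)) y ∂μ
      = ENNReal.ofReal (∫ y, transferR n ϱ a y * (f y : ℝ) ∂μ) := by
    rw [ofReal_integral_eq_lintegral_ofReal i2
      (Filter.Eventually.of_forall fun y => mul_nonneg (hLa y) (f y).2)]
    refine lintegral_congr fun y => ?_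
    simp [ENNReal.ofReal_mul (hLa y), ENNReal.ofReal_coe_nnreal]
  rw [e1, e2, key]

lemma shift_mp (hϱ : ∀ x, 0 ≤ ϱ x)
    (hϱsum : ∀ y : BSpace n, ∑ i : Fin n, ϱ (cons n i y) = 1)
    (hμ : ∀ a : C(BSpace n, ℂ), ∫ y, transfer n ϱ a y ∂μ = ∫ y, a y ∂μ) :
    MeasurePreserving (shift n) μ μ := by
  refine ⟨(shift_continuous n).measurable, ?_⟩
  have h := map_withDensity ϱ μ hϱ hμ 1 (fun x => zero_le_one)
  have e1 : (fun x : BSpace n => ENNReal.ofReal ((1 : C(BSpace n, ℝ)) x)) = 1 := by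
    funext x; simp
  have e2 : (fun y : BSpace n => ENNReal.ofReal (transferR n ϱ 1 y)) = 1 := by
    funext y
    rw [transferR_apply]
    simp only [ContinuousMap.one_apply, mul_one, hϱsum y, ENNReal.ofReal_one, Pi.one_apply]
  rw [e1, e2, withDensity_one] at h
  exact h

lemma lint_shift (hϱ : ∀ x, 0 ≤ ϱ x)
    (hμ : ∀ a : C(BSpace n, ℂ), ∫ y, transfer n ϱ a y ∂μ = ∫ y, a y ∂μ)
    (a : C(BSpace n, ℝ)) (ha : ∀ x, 0 ≤ a x) {F : BSpace n → ℝ≥0∞} (hF : Measurable F) :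
    ∫⁻ x, ENNReal.ofReal (a x) * F (shift n x) ∂μ
      = ∫⁻ y, ENNReal.ofReal (transferR n ϱ a y) * F y ∂μ := by
  have hma : Measurable fun x => ENNReal.ofReal (a x) :=
    ENNReal.measurable_ofReal.comp a.continuous.measurable
  have hmLa : Measurable fun y => ENNReal.ofReal (transferR n ϱ a y) :=
    ENNReal.measurable_ofReal.comp (transferR n ϱ a).continuous.measurable
  have hFs : Measurable fun x => F (shift n x) := hF.comp (shift_continuous n).measurable
  have h1 : ∫⁻ x, ENNReal.ofReal (a x) * F (shift n x) ∂μ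
      = ∫⁻ x, F (shift n x) ∂(μ.withDensity fun x => ENNReal.ofReal (a x)) :=
    (lintegral_withDensity_eq_lintegral_mul μ hma hFs).symm
  have h2 : ∫⁻ x, F (shift n x) ∂(μ.withDensity fun x => ENNReal.ofReal (a x))
      = ∫⁻ y, F y ∂(Measure.map (shift n) (μ.withDensity fun x => ENNReal.ofReal (a x))) :=
    (lintegral_map hF (shift_continuous n).measurable).symm
  rw [h1, h2, map_withDensity ϱ μ hϱ hμ a ha,
    lintegral_withDensity_eq_lintegral_mul μ hmLa hF]
  rfl

/-- cylinder sets are a neighbourhood basis -/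
lemma exists_cyl_subset {U : Set (BSpace n)} (hU : IsOpen U) {x₀ : BSpace n} (hx₀ : x₀ ∈ U) :
    ∃ N : ℕ, {x : BSpace n | (fun k : Fin N => x ↑k) = (fun k : Fin N => x₀ ↑k)} ⊆ U := by
  have hmem : U ∈ nhds x₀ := hU.mem_nhds hx₀
  rw [nhds_pi, Filter.mem_pi] at hmem
  obtain ⟨I, hIf, t, ht, hsub⟩ := hmem
  obtain ⟨N, hN⟩ := hIf.bddAbove
  refine ⟨N + 1, fun x hx => hsub fun i hi => ?_⟩
  have hieq : x i = x₀ i := by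
    have := congrFun hx ⟨i, Nat.lt_succ_of_le (hN hi)⟩
    exact this
  rw [hieq]
  have := ht i
  rwa [nhds_discrete, Filter.mem_pure] at this

lemma cyl_measurableSet (N : ℕ) (v : Fin N → Fin n) :
    MeasurableSet {x : BSpace n | (fun k : Fin N => x ↑k) = v} :=
  (((isClopen_discrete ({v} : Set (Fin N → Fin n))).preimage
    (continuous_pi fun k => continuous_apply (k : ℕ))).isOpen).measurableSet

lemma cyl_pos (hϱpos : ∀ x, 0 < ϱ x) [Nonempty (Fin n)]
    (hμ : ∀ a : C(BSpace n, ℂ), ∫ y, transfer n ϱ a y ∂μ = ∫ y, a y ∂μ) :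
    ∀ (N : ℕ) (v : Fin N → Fin n), 0 < μ {x : BSpace n | (fun k : Fin N => x ↑k) = v} := by
  obtain ⟨z₀, -, hz₀'⟩ := isCompact_univ.exists_isMinOn (Set.univ_nonempty (α := BSpace n))
    ϱ.continuous.continuousOn
  have hz₀ : ∀ y, ϱ z₀ ≤ ϱ y := fun y => isMinOn_iff.mp hz₀' y (Set.mem_univ y)
  set δ := ϱ z₀ with hδ
  have hδpos : 0 < δ := hϱpos z₀
  intro N
  induction N with
  | zero =>
    intro v
    have : {x : BSpace n | (fun k : Fin 0 => x ↑k) = v} = Set.univ := by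
      refine Set.eq_univ_iff_forall.mpr fun x => ?_
      exact funext fun k => k.elim0
    rw [this]
    simp
  | succ N ih =>
    intro v
    set v' : Fin N → Fin n := fun k => v k.succ with hv'
    set S := {x : BSpace n | (fun k : Fin (N + 1) => x ↑k) = v} with hS
    set S' := {x : BSpace n | (fun k : Fin N => x ↑k) = v'} with hS'
    -- integral of the cylinder indicator
    have h1 : ∫ y, cylCM n (N + 1) v y ∂μ = ((μ S).toReal : ℂ) := by
      have e : (fun y => cylCM n (N + 1) v y) = S.indicator (fun _ => (1 : ℂ)) := by
        funext x
        by_cases hx : (fun k : Fin (N + 1) => x ↑k) = v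
        · simp [cylCM, hx, Set.indicator_apply, hS, Set.mem_setOf_eq]
        · simp [cylCM, hx, Set.indicator_apply, hS, Set.mem_setOf_eq]
      rw [e, integral_indicator_const (1 : ℂ) (cyl_measurableSet (N + 1) v)]
      simp
      rfl
    -- transfer of the cylinder indicator
    set g : BSpace n → ℝ := fun y => if (fun k : Fin N => y ↑k) = v' then ϱ (cons n (v 0) y) else 0
      with hg
    have h2 : ∀ y, transfer n ϱ (cylCM n (N + 1) v) y = ((g y : ℝ) : ℂ) := by
      intro y
      have hterm : ∀ i : Fin n, i ≠ v 0 →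
          (ϱ (cons n i y) : ℂ) * cylCM n (N + 1) v (cons n i y) = 0 := by
        intro i hi
        have : ¬ ((fun k : Fin (N + 1) => cons n i y ↑k) = v) := by
          intro h
          exact hi (congrFun h 0)
        simp [cylCM, this]
      have hcond : ((fun k : Fin (N + 1) => cons n (v 0) y ↑k) = v)
          ↔ ((fun k : Fin N => y ↑k) = v') := by
        constructor
        · intro h
          funext k
          have := congrFun h k.succ
          simpa [cons, Fin.val_succ] using this
        · intro h
          funext k
          refine Fin.cases ?_ (fun j => ?_) k
          · rfl
          · have := congrFun h j
            simpa [cons, Fin.val_succ] using this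
      rw [transfer, ContinuousMap.coe_mk,
        Finset.sum_eq_single (v 0) (fun i _ hi => hterm i hi) (by simp)]
      by_cases hy : (fun k : Fin N => y ↑k) = v'
      · simp [cylCM, hcond.mpr hy, hg, hy]
      · have : ¬ ((fun k : Fin (N + 1) => cons n (v 0) y ↑k) = v) := fun h => hy (hcond.mp h)
        simp [cylCM, this, hg, hy]
    -- rewrite via hμ
    have h3 := hμ (cylCM n (N + 1) v)
    rw [h1] at h3
    simp only [h2] at h3
    have h4 : ∀ gg : BSpace n → ℝ, ∫ x, ((gg x : ℝ) : ℂ) ∂μ = ((∫ x, gg x ∂μ : ℝ) : ℂ) :=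
      fun gg => integral_ofReal
    rw [h4] at h3
    have h5 : (μ S).toReal = ∫ x, g x ∂μ := by exact_mod_cast h3.symm
    -- bound below
    have hgind : g = S'.indicator (fun y => ϱ (cons n (v 0) y)) := by
      funext y
      by_cases hy : (fun k : Fin N => y ↑k) = v'
      · simp [hg, hy, Set.indicator_apply, hS', Set.mem_setOf_eq]
      · simp [hg, hy, Set.indicator_apply, hS', Set.mem_setOf_eq]
    have hi1 : Integrable (S'.indicator (fun _ => δ)) μ :=
      (integrable_const δ).indicator (cyl_measurableSet N v')
    have hi2 : Integrable g μ := by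
      rw [hgind]
      exact (integrable_cm μ ⟨fun y => ϱ (cons n (v 0) y),
        ϱ.continuous.comp (cons_continuous n (v 0))⟩).indicator (cyl_measurableSet N v')
    have hmono : ∀ y, S'.indicator (fun _ => δ) y ≤ g y := by
      intro y
      rw [hgind]
      by_cases hy : y ∈ S'
      · simp only [Set.indicator_of_mem hy]
        exact hz₀ _
      · simp [Set.indicator_of_notMem hy]
    have h6 : δ * (μ S').toReal ≤ (μ S).toReal := by
      rw [h5]
      calc δ * (μ S').toReal = ∫ y, S'.indicator (fun _ => δ) y ∂μ := by
            rw [integral_indicator_const δ (cyl_measurableSet N v')]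
            simp [mul_comm]
            left; rfl
        _ ≤ ∫ y, g y ∂μ := integral_mono hi1 hi2 hmono
    have hS'pos : 0 < (μ S').toReal :=
      ENNReal.toReal_pos (ne_of_gt (ih v')) (measure_ne_top μ _)
    have : 0 < (μ S).toReal := lt_of_lt_of_le (mul_pos hδpos hS'pos) h6
    exact (ENNReal.toReal_pos_iff.mp this).1

/-- the iterated weighted transfer applied to 1, as real continuous maps -/
def iterA {n : ℕ} (ϱ w : C(BSpace n, ℝ)) : ℕ → C(BSpace n, ℝ)
  | 0 => 1
  | (N + 1) => transferR n ϱ (w * iterA ϱ w N)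

variable {w : C(BSpace n, ℝ)}

lemma iterA_nonneg (hϱ : ∀ x, 0 ≤ ϱ x) (hw : ∀ x, 0 ≤ w x) :
    ∀ N y, 0 ≤ iterA ϱ w N y := by
  intro N
  induction N with
  | zero => intro y; simp [iterA]
  | succ N ih =>
    intro y
    rw [iterA, transferR_apply]
    exact Finset.sum_nonneg fun i _ => mul_nonneg (hϱ _)
      (by rw [ContinuousMap.mul_apply]; exact mul_nonneg (hw _) (ih _))

variable (LW : C(BSpace n, ℂ) →L[ℂ] C(BSpace n, ℂ))

lemma LW_pow_one
    (hLW : ∀ (b : C(BSpace n, ℂ)) (y : BSpace n),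
      LW b y = ∑ i : Fin n, (ϱ (cons n i y) : ℂ) * (w (cons n i y) : ℂ) * b (cons n i y)) :
    ∀ N y, ((LW ^ N) 1) y = ((iterA ϱ w N y : ℝ) : ℂ) := by
  intro N
  induction N with
  | zero => intro y; simp [iterA]
  | succ N ih =>
    intro y
    have hsucc : (LW ^ (N + 1)) 1 = LW ((LW ^ N) 1) := by
      rw [pow_succ']; rfl
    rw [hsucc, hLW, iterA, transferR_apply]
    push_cast [Pi.mul_apply]
    refine Finset.sum_congr rfl fun i _ => ?_
    rw [← FunLike.coe_pow_eq_iterate, ih]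
    push_cast
    ring

lemma LW_norm [Nonempty (Fin n)] (hϱ : ∀ x, 0 ≤ ϱ x) (hw : ∀ x, 0 ≤ w x)
    (hLW : ∀ (b : C(BSpace n, ℂ)) (y : BSpace n),
      LW b y = ∑ i : Fin n, (ϱ (cons n i y) : ℂ) * (w (cons n i y) : ℂ) * b (cons n i y)) :
    ∀ N, ‖LW ^ N‖ = ‖iterA ϱ w N‖ := by
  intro N
  have h1 : ∀ y, ((LW ^ N) 1) y = ((iterA ϱ w N y : ℝ) : ℂ) := LW_pow_one ϱ LW hLW N
  have hnorm1 : ‖(LW ^ N) 1‖ = ‖iterA ϱ w N‖ := by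
    simp only [ContinuousMap.norm_eq_iSup_norm, h1, Complex.norm_real]
  -- pointwise bound
  have hpt : ∀ (M : ℕ) (b : C(BSpace n, ℂ)) (y : BSpace n),
      ‖((LW ^ M) b) y‖ ≤ iterA ϱ w M y * ‖b‖ := by
    intro M
    induction M with
    | zero =>
      intro b y
      simp only [pow_zero, ContinuousLinearMap.one_apply, iterA, ContinuousMap.one_apply, one_mul]
      exact b.norm_coe_le_norm y
    | succ M ih =>
      intro b y
      have hsucc : (LW ^ (M + 1)) b = LW ((LW ^ M) b) := by
        rw [pow_succ']; rfl
      rw [hsucc, hLW, iterA, transferR_apply, Finset.sum_mul]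
      refine (norm_sum_le _ _).trans (Finset.sum_le_sum fun i _ => ?_)
      set c := cons n i y with hc
      have hbound : ‖(ϱ c : ℂ) * (w c : ℂ) * ((LW ^ M) b) c‖
          = ϱ c * w c * ‖((LW ^ M) b) c‖ := by
        rw [norm_mul, norm_mul, Complex.norm_real, Complex.norm_real, Real.norm_eq_abs,
          Real.norm_eq_abs, abs_of_nonneg (hϱ _), abs_of_nonneg (hw _)]
      rw [hbound, ContinuousMap.mul_apply]
      calc ϱ c * w c * ‖((LW ^ M) b) c‖ ≤ ϱ c * w c * (iterA ϱ w M c * ‖b‖) :=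
            mul_le_mul_of_nonneg_left (ih b _) (mul_nonneg (hϱ _) (hw _))
        _ = ϱ c * (w c * iterA ϱ w M c) * ‖b‖ := by ring
  refine le_antisymm ?_ ?_
  · refine ContinuousLinearMap.opNorm_le_bound _ (norm_nonneg _) fun b => ?_
    refine (ContinuousMap.norm_le _ (mul_nonneg (norm_nonneg _) (norm_nonneg _))).mpr fun y => ?_
    refine (hpt N b y).trans ?_
    exact mul_le_mul_of_nonneg_right
      ((Real.le_norm_self _).trans ((iterA ϱ w N).norm_coe_le_norm y)) (norm_nonneg b)
  · calc ‖iterA ϱ w N‖ = ‖(LW ^ N) 1‖ := hnorm1.symm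
      _ ≤ ‖LW ^ N‖ * ‖(1 : C(BSpace n, ℂ))‖ := (LW ^ N).le_opNorm 1
      _ = ‖LW ^ N‖ := by rw [norm_one, mul_one]

lemma B_pow_ae (hmp : MeasurePreserving (shift n) μ μ)
    (B : Lp ℂ 1 μ →L[ℂ] Lp ℂ 1 μ)
    (hB : ∀ g : Lp ℂ 1 μ,
      (B g : BSpace n → ℂ) =ᵐ[μ] fun x => (w x : ℂ) * g (shift n x)) :
    ∀ (N : ℕ) (f : Lp ℂ 1 μ), ((B ^ N) f : BSpace n → ℂ)
      =ᵐ[μ] fun x => ((∏ k ∈ Finset.range N, w ((shift n)^[k] x) : ℝ) : ℂ)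
        * (f : BSpace n → ℂ) ((shift n)^[N] x) := by
  intro N
  induction N with
  | zero =>
    intro f
    simp only [pow_zero, ContinuousLinearMap.one_apply, Finset.range_zero, Finset.prod_empty,
      Function.iterate_zero, id_eq, Complex.ofReal_one, one_mul]
    exact Filter.EventuallyEq.rfl
  | succ N ih =>
    intro f
    have hsucc : (B ^ (N + 1)) f = B ((B ^ N) f) := by rw [pow_succ']; rfl
    rw [hsucc]
    refine (hB ((B ^ N) f)).trans ?_
    have hcomp := hmp.quasiMeasurePreserving.ae_eq_comp (ih f)
    filter_upwards [hcomp] with x hx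
    have hx' : ((B ^ N) f : BSpace n → ℂ) (shift n x)
        = ((∏ k ∈ Finset.range N, w ((shift n)^[k] (shift n x)) : ℝ) : ℂ)
          * (f : BSpace n → ℂ) ((shift n)^[N] (shift n x)) := hx
    rw [hx']
    simp only [← Function.iterate_succ_apply]
    rw [Finset.prod_range_succ']
    push_cast
    simp only [Function.iterate_zero, id_eq]
    ring

lemma B_lint (hϱ : ∀ x, 0 ≤ ϱ x) (hw : ∀ x, 0 ≤ w x)
    (hμ : ∀ a : C(BSpace n, ℂ), ∫ y, transfer n ϱ a y ∂μ = ∫ y, a y ∂μ) :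
    ∀ (N : ℕ) {F : BSpace n → ℝ≥0∞}, Measurable F →
      ∫⁻ x, ENNReal.ofReal (∏ k ∈ Finset.range N, w ((shift n)^[k] x)) * F ((shift n)^[N] x) ∂μ
        = ∫⁻ y, ENNReal.ofReal (iterA ϱ w N y) * F y ∂μ := by
  intro N
  induction N with
  | zero =>
    intro F hF
    simp [iterA]
  | succ N ih =>
    intro F hF
    have hG : Measurable fun z => ENNReal.ofReal (w z) * F (shift n z) :=
      (ENNReal.measurable_ofReal.comp w.continuous.measurable).mul
        (hF.comp (shift_continuous n).measurable)
    have e1 : ∀ x, ENNReal.ofReal (∏ k ∈ Finset.range (N + 1), w ((shift n)^[k] x))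
          * F ((shift n)^[N + 1] x)
        = ENNReal.ofReal (∏ k ∈ Finset.range N, w ((shift n)^[k] x)) *
          ((fun z => ENNReal.ofReal (w z) * F (shift n z)) ((shift n)^[N] x)) := by
      intro x
      rw [Finset.prod_range_succ, ENNReal.ofReal_mul (Finset.prod_nonneg fun k _ => hw _),
        Function.iterate_succ_apply', mul_assoc]
    simp only [e1]
    rw [ih hG]
    have e2 : ∀ y, ENNReal.ofReal (iterA ϱ w N y) * (ENNReal.ofReal (w y) * F (shift n y))
        = ENNReal.ofReal ((w * iterA ϱ w N) y) * F (shift n y) := by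
      intro y
      rw [ContinuousMap.mul_apply, ENNReal.ofReal_mul (hw _)]
      ring
    simp only [e2]
    rw [lint_shift ϱ μ hϱ hμ (w * iterA ϱ w N)
      (fun x => by rw [ContinuousMap.mul_apply]; exact mul_nonneg (hw x) (iterA_nonneg ϱ hϱ hw N x))
      hF]
    simp only [iterA]

lemma B_norm_eq (hmp : MeasurePreserving (shift n) μ μ)
    (hϱ : ∀ x, 0 ≤ ϱ x) (hw : ∀ x, 0 ≤ w x)
    (hμ : ∀ a : C(BSpace n, ℂ), ∫ y, transfer n ϱ a y ∂μ = ∫ y, a y ∂μ)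
    (B : Lp ℂ 1 μ →L[ℂ] Lp ℂ 1 μ)
    (hB : ∀ g : Lp ℂ 1 μ,
      (B g : BSpace n → ℂ) =ᵐ[μ] fun x => (w x : ℂ) * g (shift n x))
    (N : ℕ) (f : Lp ℂ 1 μ) :
    ‖(B ^ N) f‖
      = (∫⁻ x, ENNReal.ofReal (iterA ϱ w N x) * ‖(f : BSpace n → ℂ) x‖₊ ∂μ).toReal := by
  obtain ⟨fm, hfm_sm, hae⟩ : ∃ fm : BSpace n → ℂ, StronglyMeasurable fm
      ∧ (f : BSpace n → ℂ) =ᵐ[μ] fm :=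
    ⟨(Lp.aestronglyMeasurable f).mk _, (Lp.aestronglyMeasurable f).stronglyMeasurable_mk,
      (Lp.aestronglyMeasurable f).ae_eq_mk⟩
  have hFm : Measurable fun x => (‖fm x‖₊ : ℝ≥0∞) := hfm_sm.measurable.enorm
  rw [Lp.norm_def, eLpNorm_congr_ae (B_pow_ae μ hmp B hB N f),
    eLpNorm_one_eq_lintegral_enorm]
  simp only [enorm_eq_nnnorm]
  congr 1
  have step1 : ∫⁻ x, ‖((∏ k ∈ Finset.range N, w ((shift n)^[k] x) : ℝ) : ℂ)
        * (f : BSpace n → ℂ) ((shift n)^[N] x)‖₊ ∂μ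
      = ∫⁻ x, ENNReal.ofReal (∏ k ∈ Finset.range N, w ((shift n)^[k] x))
        * ‖fm ((shift n)^[N] x)‖₊ ∂μ := by
    have hcomp := (hmp.iterate N).quasiMeasurePreserving.ae_eq_comp hae
    refine lintegral_congr_ae ?_
    filter_upwards [hcomp] with x hx
    have hx' : (f : BSpace n → ℂ) ((shift n)^[N] x) = fm ((shift n)^[N] x) := hx
    rw [nnnorm_mul, ENNReal.coe_mul, hx', Complex.nnnorm_real,
      (enorm_eq_nnnorm _).symm.trans (Real.enorm_eq_ofReal (Finset.prod_nonneg fun k _ => hw _))]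
  rw [step1, B_lint ϱ μ hϱ hw hμ N hFm]
  refine lintegral_congr_ae ?_
  filter_upwards [hae] with x hx
  rw [hx]

lemma B_opnorm [Nonempty (Fin n)] (hϱpos : ∀ x, 0 < ϱ x)
    (hϱsum : ∀ y : BSpace n, ∑ i : Fin n, ϱ (cons n i y) = 1)
    (hw : ∀ x, 0 ≤ w x)
    (hμ : ∀ a : C(BSpace n, ℂ), ∫ y, transfer n ϱ a y ∂μ = ∫ y, a y ∂μ)
    (B : Lp ℂ 1 μ →L[ℂ] Lp ℂ 1 μ)
    (hB : ∀ g : Lp ℂ 1 μ,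
      (B g : BSpace n → ℂ) =ᵐ[μ] fun x => (w x : ℂ) * g (shift n x))
    (N : ℕ) : ‖B ^ N‖ = ‖iterA ϱ w N‖ := by
  have hϱ : ∀ x, 0 ≤ ϱ x := fun x => (hϱpos x).le
  have hmp := shift_mp ϱ μ hϱ hϱsum hμ
  have hA := iterA_nonneg ϱ hϱ hw N
  set M := ‖iterA ϱ w N‖ with hM
  refine le_antisymm ?_ ?_
  · refine ContinuousLinearMap.opNorm_le_bound _ (norm_nonneg _) fun f => ?_
    rw [B_norm_eq ϱ μ hmp hϱ hw hμ B hB N f]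
    have hb : ∫⁻ x, ENNReal.ofReal (iterA ϱ w N x) * ‖(f : BSpace n → ℂ) x‖₊ ∂μ
        ≤ ENNReal.ofReal M * eLpNorm (f : BSpace n → ℂ) 1 μ := by
      rw [eLpNorm_one_eq_lintegral_enorm, ← lintegral_const_mul' _ _ ENNReal.ofReal_ne_top]
      refine lintegral_mono fun x => mul_le_mul_left (ENNReal.ofReal_le_ofReal
        ((Real.le_norm_self _).trans ((iterA ϱ w N).norm_coe_le_norm x))) _
    have hfin : ENNReal.ofReal M * eLpNorm (f : BSpace n → ℂ) 1 μ ≠ ∞ :=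
      ENNReal.mul_ne_top ENNReal.ofReal_ne_top (Lp.eLpNorm_ne_top f)
    refine (ENNReal.toReal_mono hfin hb).trans ?_
    rw [ENNReal.toReal_mul, ENNReal.toReal_ofReal (norm_nonneg _), ← Lp.norm_def]
  · refine le_of_forall_sub_le fun ε hε => ?_
    rcases le_or_gt (M - ε) 0 with hMε | hMε
    · exact hMε.trans (norm_nonneg _)
    obtain ⟨x₀, -, hx₀'⟩ := isCompact_univ.exists_isMaxOn (Set.univ_nonempty (α := BSpace n))
      (iterA ϱ w N).continuous.continuousOn
    have hmax : ∀ y, iterA ϱ w N y ≤ iterA ϱ w N x₀ :=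
      fun y => isMaxOn_iff.mp hx₀' y (Set.mem_univ y)
    have hMx₀ : M = iterA ϱ w N x₀ := by
      refine le_antisymm ?_ ((Real.le_norm_self _).trans ((iterA ϱ w N).norm_coe_le_norm x₀))
      refine (ContinuousMap.norm_le _ (hA x₀)).mpr fun y => ?_
      rw [Real.norm_eq_abs, abs_of_nonneg (hA y)]
      exact hmax y
    have hUopen : IsOpen {y : BSpace n | M - ε < iterA ϱ w N y} :=
      isOpen_lt continuous_const (iterA ϱ w N).continuous
    have hx₀U : x₀ ∈ {y : BSpace n | M - ε < iterA ϱ w N y} := by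
      show M - ε < iterA ϱ w N x₀
      calc M - ε < M := sub_lt_self M hε
        _ = _ := hMx₀
    obtain ⟨K, hK⟩ := exists_cyl_subset hUopen hx₀U
    have hCmeas := cyl_measurableSet K (fun k : Fin K => x₀ ↑k)
    have hCpos : 0 < μ {x : BSpace n | (fun k : Fin K => x ↑k) = fun k : Fin K => x₀ ↑k} :=
      cyl_pos ϱ μ hϱpos hμ K _
    set Cs := {x : BSpace n | (fun k : Fin K => x ↑k) = fun k : Fin K => x₀ ↑k} with hCs
    set g : C(BSpace n, ℂ) := cylCM n K (fun k : Fin K => x₀ ↑k) with hgdef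
    have hgpt : ∀ x, (‖g x‖₊ : ℝ≥0∞) = Cs.indicator (fun _ => (1 : ℝ≥0∞)) x := by
      intro x
      by_cases hx : (fun k : Fin K => x ↑k) = fun k : Fin K => x₀ ↑k
      · have hxC : x ∈ Cs := hx
        simp [hgdef, cylCM, hx, Set.indicator_of_mem hxC]
      · have hxC : x ∉ Cs := hx
        simp [hgdef, cylCM, hx, Set.indicator_of_notMem hxC]
    set fC : Lp ℂ 1 μ := ContinuousMap.toLp (E := ℂ) (p := (1 : ℝ≥0∞)) (μ := μ) ℂ g with hfCdef
    have hfCcoe : (fC : BSpace n → ℂ) =ᵐ[μ] g := ContinuousMap.coeFn_toLp (E := ℂ) μ g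
    have hnormfC : ‖fC‖ = (μ Cs).toReal := by
      rw [Lp.norm_def, eLpNorm_congr_ae hfCcoe, eLpNorm_one_eq_lintegral_enorm,
        lintegral_congr (f := fun x => ‖g x‖ₑ) hgpt, lintegral_indicator hCmeas, setLIntegral_one]
    have h1 : ‖(B ^ N) fC‖ = (∫⁻ x, ENNReal.ofReal (iterA ϱ w N x) * ‖g x‖₊ ∂μ).toReal := by
      rw [B_norm_eq ϱ μ hmp hϱ hw hμ B hB N fC]
      refine congrArg _ (lintegral_congr_ae ?_)
      filter_upwards [hfCcoe] with x hx
      rw [hx]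
    have h2 : ENNReal.ofReal (M - ε) * μ Cs
        ≤ ∫⁻ x, ENNReal.ofReal (iterA ϱ w N x) * ‖g x‖₊ ∂μ := by
      have hpt2 : ∀ x, Cs.indicator (fun _ => ENNReal.ofReal (M - ε)) x
          ≤ ENNReal.ofReal (iterA ϱ w N x) * ‖g x‖₊ := by
        intro x
        by_cases hx : x ∈ Cs
        · rw [Set.indicator_of_mem hx, hgpt x, Set.indicator_of_mem hx, mul_one]
          exact ENNReal.ofReal_le_ofReal (le_of_lt (hK hx))
        · rw [Set.indicator_of_notMem hx]
          exact zero_le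
      calc ENNReal.ofReal (M - ε) * μ Cs
          = ∫⁻ x, Cs.indicator (fun _ => ENNReal.ofReal (M - ε)) x ∂μ := by
            rw [lintegral_indicator hCmeas, setLIntegral_const]
        _ ≤ _ := lintegral_mono hpt2
    have hfin2 : ∫⁻ x, ENNReal.ofReal (iterA ϱ w N x) * ‖g x‖₊ ∂μ ≠ ∞ := by
      refine ne_of_lt (lt_of_le_of_lt (lintegral_mono fun x => ?_) (?_ :
        ∫⁻ _, ENNReal.ofReal M ∂μ < ∞))
      · calc ENNReal.ofReal (iterA ϱ w N x) * ‖g x‖₊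
            ≤ ENNReal.ofReal M * 1 := mul_le_mul' (ENNReal.ofReal_le_ofReal
              ((Real.le_norm_self _).trans ((iterA ϱ w N).norm_coe_le_norm x)))
              (by rw [hgpt x]
                  exact Set.indicator_apply_le' (fun _ => le_rfl) (fun _ => zero_le))
          _ = ENNReal.ofReal M := mul_one _
      · rw [lintegral_const]
        exact ENNReal.mul_lt_top ENNReal.ofReal_lt_top (measure_lt_top μ _)
    have hle : (M - ε) * (μ Cs).toReal ≤ ‖(B ^ N) fC‖ := by
      rw [h1]
      have h3 := ENNReal.toReal_mono hfin2 h2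
      rwa [ENNReal.toReal_mul, ENNReal.toReal_ofReal hMε.le] at h3
    have hop := (B ^ N).le_opNorm fC
    rw [hnormfC] at hop
    have hμpos : 0 < (μ Cs).toReal := ENNReal.toReal_pos (ne_of_gt hCpos) (measure_ne_top μ _)
    exact le_of_mul_le_mul_right (hle.trans hop) hμpos

end Stmt15

/-- Let `w ∈ C(X)` with `w ≥ 0`. Then the spectral radius of the weighted
composition operator `π(w)T_φ : g ↦ w·(g∘φ)` acting on `L¹_μ(X)` equals the spectral radius
of the weighted transfer operator `L_w : C(X) → C(X)`, `L_w(b) = L(w·b)`, acting on the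
Banach space `C(X)` with the supremum norm. -/


theorem stmt_15 (n : ℕ) (hn : 2 ≤ n)
    (ϱ : C(BSpace n, ℝ)) (hϱpos : ∀ x, 0 < ϱ x)
    (hϱsum : ∀ y : BSpace n, ∑ i : Fin n, ϱ (cons n i y) = 1)
    (μ : Measure (BSpace n)) [IsProbabilityMeasure μ]
    (hμ : ∀ a : C(BSpace n, ℂ), ∫ y, transfer n ϱ a y ∂μ = ∫ y, a y ∂μ)
    (w : C(BSpace n, ℝ)) (hw : ∀ x, 0 ≤ w x)
    (B : Lp ℂ 1 μ →L[ℂ] Lp ℂ 1 μ)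
    (hB : ∀ g : Lp ℂ 1 μ,
      (B g : BSpace n → ℂ) =ᵐ[μ] fun x => (w x : ℂ) * g (shift n x))
    (LW : C(BSpace n, ℂ) →L[ℂ] C(BSpace n, ℂ))
    (hLW : ∀ (b : C(BSpace n, ℂ)) (y : BSpace n),
      LW b y = ∑ i : Fin n, (ϱ (cons n i y) : ℂ) * (w (cons n i y) : ℂ) * b (cons n i y)) :
    spectralRadius ℂ B = spectralRadius ℂ LW := by
  haveI : Nonempty (Fin n) := ⟨⟨0, by omega⟩⟩
  have hB_norm : ∀ N : ℕ, ‖B ^ N‖ = ‖Stmt15.iterA ϱ w N‖ := fun N =>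
    Stmt15.B_opnorm ϱ μ hϱpos hϱsum hw hμ B hB N
  have hLW_norm : ∀ N : ℕ, ‖LW ^ N‖ = ‖Stmt15.iterA ϱ w N‖ := fun N =>
    Stmt15.LW_norm ϱ LW (fun x => (hϱpos x).le) hw hLW N
  have hkey : ∀ N : ℕ, (‖B ^ N‖₊ : ℝ≥0∞) = (‖LW ^ N‖₊ : ℝ≥0∞) := by
    intro N
    have h : ‖B ^ N‖ = ‖LW ^ N‖ := (hB_norm N).trans (hLW_norm N).symm
    have h2 : ‖B ^ N‖₊ = ‖LW ^ N‖₊ := NNReal.coe_injective (by simpa [coe_nnnorm] using h)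
    rw [h2]
  have h1 := spectrum.pow_nnnorm_pow_one_div_tendsto_nhds_spectralRadius B
  have h2 := spectrum.pow_nnnorm_pow_one_div_tendsto_nhds_spectralRadius LW
  have h1' : Filter.Tendsto (fun N : ℕ => (‖LW ^ N‖₊ : ℝ≥0∞) ^ (1 / N : ℝ)) Filter.atTop
      (nhds (spectralRadius ℂ B)) := by
    simpa only [hkey] using h1
  exact tendsto_nhds_unique h1' h2

end
end

section
/- For every a ∈ C(X), the spectral radius of the weighted composition operator π(a)T_φ : f ↦ a·(f∘φ) on L^p_μ(X) is given by r(π(a)T_φ) = r_{B(C(X))}(L_{|a|^p})^{1/p}, where L_{|a|^p} : C(X) → C(X) is the weighted transfer operator L_{|a|^p}(b) := L(|a|^p·b) and r_{B(C(X))} denotes its spectral radius on C(X) with the supremum norm. -/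
open MeasureTheory
open scoped ENNReal

noncomputable section

namespace Stmt16Aux

open scoped NNReal

lemma shift_cons (n : ℕ) (i : Fin n) (y : BSpace n) : shift n (cons n i y) = y := rfl

/-- Real-valued transfer operator. -/
def transferR (n : ℕ) (ϱ : C(BSpace n, ℝ)) (g : C(BSpace n, ℝ)) : C(BSpace n, ℝ) :=
  ⟨fun y => ∑ i : Fin n, ϱ (cons n i y) * g (cons n i y), by
    refine continuous_finset_sum _ fun i _ => ?_
    exact (ϱ.continuous.comp (cons_continuous n i)).mul
      (g.continuous.comp (cons_continuous n i))⟩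

/-- Complexification of a real continuous map. -/
def ofRealCM {n : ℕ} (g : C(BSpace n, ℝ)) : C(BSpace n, ℂ) :=
  ⟨fun x => ((g x : ℝ) : ℂ), Complex.continuous_ofReal.comp g.continuous⟩

lemma transfer_ofRealCM (n : ℕ) (ϱ : C(BSpace n, ℝ)) (g : C(BSpace n, ℝ)) :
    transfer n ϱ (ofRealCM g) = ofRealCM (transferR n ϱ g) := by
  ext y
  show (∑ i : Fin n, (ϱ (cons n i y) : ℂ) * ((g (cons n i y) : ℝ) : ℂ))
    = ((∑ i : Fin n, ϱ (cons n i y) * g (cons n i y) : ℝ) : ℂ)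
  push_cast
  rfl

variable {n : ℕ} {ϱ : C(BSpace n, ℝ)} {μ : Measure (BSpace n)}

lemma integrable_cm [IsFiniteMeasure μ] (g : C(BSpace n, ℝ)) : Integrable g μ :=
  g.continuous.integrable_of_hasCompactSupport (HasCompactSupport.of_compactSpace g)

lemma lintegral_cm_eq [IsFiniteMeasure μ] (g : C(BSpace n, ℝ)) (hg : ∀ x, 0 ≤ g x) :
    ∫⁻ x, ENNReal.ofReal (g x) ∂μ = ENNReal.ofReal (∫ x, g x ∂μ) :=
  (ofReal_integral_eq_lintegral_ofReal (integrable_cm g) (.of_forall hg)).symm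

section

variable [IsProbabilityMeasure μ]
  (hμ : ∀ a : C(BSpace n, ℂ), ∫ y, transfer n ϱ a y ∂μ = ∫ y, a y ∂μ)
  (hϱpos : ∀ x, 0 < ϱ x)

include hμ

lemma integral_transferR (g : C(BSpace n, ℝ)) :
    ∫ y, transferR n ϱ g y ∂μ = ∫ y, g y ∂μ := by
  have h := hμ (ofRealCM g)
  rw [transfer_ofRealCM] at h
  have h1 : ∫ y, ofRealCM (transferR n ϱ g) y ∂μ = ((∫ y, transferR n ϱ g y ∂μ : ℝ) : ℂ) :=
    integral_ofReal
  have h2 : ∫ y, ofRealCM g y ∂μ = ((∫ y, g y ∂μ : ℝ) : ℂ) := integral_ofReal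
  rw [h1, h2] at h
  exact_mod_cast h

lemma key_cov (G F : C(BSpace n, ℝ)) :
    ∫ x, G x * F (shift n x) ∂μ = ∫ y, transferR n ϱ G y * F y ∂μ := by
  have h := hμ (ofRealCM (G * F.comp (shiftCM n)))
  have e : transfer n ϱ (ofRealCM (G * F.comp (shiftCM n)))
      = ofRealCM (transferR n ϱ G * F) := by
    ext y
    show (∑ i : Fin n, (ϱ (cons n i y) : ℂ) *
      (((G (cons n i y) * F (shift n (cons n i y)) : ℝ)) : ℂ)) = _
    show _ = (((∑ i : Fin n, ϱ (cons n i y) * G (cons n i y)) * F y : ℝ) : ℂ)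
    simp only [shift_cons]
    push_cast
    rw [Finset.sum_mul]
    refine Finset.sum_congr rfl fun i _ => ?_
    ring
  rw [e] at h
  have h1 : ∫ y, ofRealCM (transferR n ϱ G * F) y ∂μ
      = ((∫ y, transferR n ϱ G y * F y ∂μ : ℝ) : ℂ) := integral_ofReal
  have h2 : ∫ y, ofRealCM (G * F.comp (shiftCM n)) y ∂μ
      = ((∫ x, G x * F (shift n x) ∂μ : ℝ) : ℂ) := integral_ofReal
  rw [h1, h2] at h
  exact_mod_cast h.symm

include hϱpos in
lemma map_withDensity (G : C(BSpace n, ℝ)) (hG : ∀ x, 0 ≤ G x) :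
    (μ.withDensity fun x => ENNReal.ofReal (G x)).map (shift n)
      = μ.withDensity fun y => ENNReal.ofReal (transferR n ϱ G y) := by
  have hGm : Measurable fun x => ENNReal.ofReal (G x) :=
    ENNReal.measurable_ofReal.comp G.continuous.measurable
  have hLm : Measurable fun x => ENNReal.ofReal (transferR n ϱ G x) :=
    ENNReal.measurable_ofReal.comp (transferR n ϱ G).continuous.measurable
  have hLG : ∀ y, 0 ≤ transferR n ϱ G y := by
    intro y
    show (0:ℝ) ≤ ∑ i : Fin n, ϱ (cons n i y) * G (cons n i y)
    refine Finset.sum_nonneg fun i _ => mul_nonneg (hϱpos (cons n i y)).le (hG _)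
  haveI : IsFiniteMeasure (μ.withDensity fun x => ENNReal.ofReal (G x)) := by
    refine isFiniteMeasure_withDensity ?_
    rw [lintegral_cm_eq G hG]; exact ENNReal.ofReal_ne_top
  haveI : IsFiniteMeasure (μ.withDensity fun y => ENNReal.ofReal (transferR n ϱ G y)) := by
    refine isFiniteMeasure_withDensity ?_
    rw [lintegral_cm_eq (transferR n ϱ G) hLG]; exact ENNReal.ofReal_ne_top
  refine ext_of_forall_lintegral_eq_of_IsFiniteMeasure fun f => ?_
  have hf : Measurable fun x => (f x : ℝ≥0∞) :=
    measurable_coe_nnreal_ennreal.comp f.continuous.measurable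
  have e1 := lintegral_withDensity_eq_lintegral_mul μ hGm
    (g := fun x => ((f (shift n x) : ℝ≥0) : ℝ≥0∞)) (hf.comp (shift_continuous n).measurable)
  have e2 := lintegral_withDensity_eq_lintegral_mul μ hLm (g := fun x => ((f x : ℝ≥0) : ℝ≥0∞)) hf
  rw [lintegral_map hf (shift_continuous n).measurable, e1, e2]
  set F : C(BSpace n, ℝ) := ⟨fun y => (f y : ℝ), NNReal.continuous_coe.comp f.continuous⟩
    with hF
  have hFnn : ∀ y, 0 ≤ F y := fun y => (f y).coe_nonneg
  have hmul1 : ∀ x, 0 ≤ (G * F.comp (shiftCM n)) x :=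
    fun x => mul_nonneg (hG x) (hFnn _)
  have hmul2 : ∀ x, 0 ≤ (transferR n ϱ G * F) x :=
    fun x => mul_nonneg (hLG x) (hFnn x)
  calc ∫⁻ x, ((fun x => ENNReal.ofReal (G x)) * fun x => ((f (shift n x) : ℝ≥0) : ℝ≥0∞)) x ∂μ
      = ∫⁻ x, ENNReal.ofReal ((G * F.comp (shiftCM n)) x) ∂μ := by
        refine lintegral_congr fun x => ?_
        simp only [Pi.mul_apply, ContinuousMap.mul_apply, ContinuousMap.comp_apply]
        rw [ENNReal.ofReal_mul (hG x)]
        congr 1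
        exact (ENNReal.ofReal_coe_nnreal (p := f _)).symm
    _ = ENNReal.ofReal (∫ x, (G * F.comp (shiftCM n)) x ∂μ) := lintegral_cm_eq _ hmul1
    _ = ENNReal.ofReal (∫ y, (transferR n ϱ G * F) y ∂μ) := by
        congr 1
        have := key_cov hμ G F
        simpa only [ContinuousMap.mul_apply, ContinuousMap.comp_apply, shiftCM, ContinuousMap.coe_mk] using this
    _ = ∫⁻ y, ENNReal.ofReal ((transferR n ϱ G * F) y) ∂μ := (lintegral_cm_eq _ hmul2).symm
    _ = ∫⁻ y, ((fun y => ENNReal.ofReal (transferR n ϱ G y)) * fun y => ((f y : ℝ≥0) : ℝ≥0∞)) y ∂μ := by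
        refine lintegral_congr fun y => ?_
        simp only [Pi.mul_apply, ContinuousMap.mul_apply]
        rw [ENNReal.ofReal_mul (hLG y)]
        congr 1
        exact ENNReal.ofReal_coe_nnreal (p := f _)

include hϱpos in
lemma lintegral_cov (G : C(BSpace n, ℝ)) (hG : ∀ x, 0 ≤ G x)
    {h : BSpace n → ℝ≥0∞} (hh : Measurable h) :
    ∫⁻ x, ENNReal.ofReal (G x) * h (shift n x) ∂μ
      = ∫⁻ y, ENNReal.ofReal (transferR n ϱ G y) * h y ∂μ := by
  have hGm : Measurable fun x => ENNReal.ofReal (G x) :=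
    ENNReal.measurable_ofReal.comp G.continuous.measurable
  have hLm : Measurable fun x => ENNReal.ofReal (transferR n ϱ G x) :=
    ENNReal.measurable_ofReal.comp (transferR n ϱ G).continuous.measurable
  have e1 := lintegral_withDensity_eq_lintegral_mul μ hGm
    (g := fun x => h (shift n x)) (hh.comp (shift_continuous n).measurable)
  have e2 := lintegral_withDensity_eq_lintegral_mul μ hLm (g := h) hh
  simp only [Pi.mul_apply] at e1 e2
  rw [← e1, ← e2, ← lintegral_map hh (shift_continuous n).measurable,
    map_withDensity hμ hϱpos G hG]

end

lemma transferR_mono (hϱ : ∀ x, 0 < ϱ x) {g g' : C(BSpace n, ℝ)} (h : ∀ y, g y ≤ g' y)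
    (y : BSpace n) : transferR n ϱ g y ≤ transferR n ϱ g' y := by
  show ∑ i : Fin n, ϱ (cons n i y) * g (cons n i y)
    ≤ ∑ i : Fin n, ϱ (cons n i y) * g' (cons n i y)
  exact Finset.sum_le_sum fun i _ => mul_le_mul_of_nonneg_left (h _) (hϱ _).le

lemma transferR_iter_mono (hϱ : ∀ x, 0 < ϱ x) (N : ℕ) {g g' : C(BSpace n, ℝ)}
    (h : ∀ y, g y ≤ g' y) : ∀ y, (transferR n ϱ)^[N] g y ≤ (transferR n ϱ)^[N] g' y := by
  induction N generalizing g g' with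
  | zero => simpa using h
  | succ N ih =>
    intro y
    rw [Function.iterate_succ_apply, Function.iterate_succ_apply]
    exact ih (fun z => transferR_mono hϱ h z) y

lemma transferR_smul (c : ℝ) (g : C(BSpace n, ℝ)) :
    transferR n ϱ (c • g) = c • transferR n ϱ g := by
  ext y
  show ∑ i : Fin n, ϱ (cons n i y) * (c • g) (cons n i y)
    = c • ∑ i : Fin n, ϱ (cons n i y) * g (cons n i y)
  simp only [ContinuousMap.smul_apply, smul_eq_mul, Finset.mul_sum]
  exact Finset.sum_congr rfl fun i _ => by ring

lemma transferR_iter_smul (N : ℕ) (c : ℝ) (g : C(BSpace n, ℝ)) :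
    (transferR n ϱ)^[N] (c • g) = c • (transferR n ϱ)^[N] g := by
  induction N generalizing g with
  | zero => simp
  | succ N ih =>
    rw [Function.iterate_succ_apply, Function.iterate_succ_apply, transferR_smul, ih]

/-- Real-valued indicator of a cylinder, as a continuous map. -/
def cylR (n N : ℕ) (w : Fin N → Fin n) : C(BSpace n, ℝ) :=
  ⟨fun x => if (fun k : Fin N => x (k : ℕ)) = w then 1 else 0, by
    have hclopen : IsClopen {x : BSpace n | (fun k : Fin N => x (k : ℕ)) = w} :=
      (isClopen_discrete ({w} : Set (Fin N → Fin n))).preimage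
        (continuous_pi fun k => continuous_apply (k : ℕ))
    refine Continuous.if (fun x hx => ?_) continuous_const continuous_const
    rw [hclopen.frontier_eq] at hx
    exact absurd hx (Set.notMem_empty x)⟩

lemma cylR_nonneg (n N : ℕ) (w : Fin N → Fin n) (x : BSpace n) : 0 ≤ cylR n N w x := by
  show (0:ℝ) ≤ if (fun k : Fin N => x (k : ℕ)) = w then 1 else 0
  split <;> norm_num

lemma transferR_cylR (N : ℕ) (w : Fin (N+1) → Fin n) (y : BSpace n) :
    transferR n ϱ (cylR n (N+1) w) y
      = ϱ (cons n (w 0) y) * cylR n N (fun k => w k.succ) y := by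
  have key : ∀ i : Fin n, cylR n (N+1) w (cons n i y)
      = if i = w 0 then cylR n N (fun k => w k.succ) y else 0 := by
    intro i
    show (if (fun k : Fin (N+1) => cons n i y (k : ℕ)) = w then (1:ℝ) else 0) = _
    by_cases h : i = w 0
    · rw [if_pos h]
      show _ = (if (fun k : Fin N => y (k : ℕ)) = (fun k => w k.succ) then (1:ℝ) else 0)
      have hiff : ((fun k : Fin (N+1) => cons n i y (k : ℕ)) = w)
          ↔ ((fun k : Fin N => y (k : ℕ)) = fun k => w k.succ) := by
        rw [funext_iff, Fin.forall_fin_succ,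
          funext_iff (f := fun k : Fin N => y (k : ℕ))]
        exact and_iff_right h
      rw [if_congr hiff rfl rfl]
    · rw [if_neg h, if_neg]
      intro hc
      exact h (congrFun hc 0)
  show ∑ i : Fin n, ϱ (cons n i y) * cylR n (N+1) w (cons n i y) = _
  simp only [key, mul_ite, mul_zero, Finset.sum_ite_eq', Finset.mem_univ, if_true]

lemma iter_cylR_pos (hϱ : ∀ x, 0 < ϱ x) :
    ∀ (N : ℕ) (w : Fin N → Fin n), ∃ δ : ℝ, 0 < δ ∧
      ∀ y, δ ≤ (transferR n ϱ)^[N] (cylR n N w) y := by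
  intro N
  induction N with
  | zero =>
    intro w
    refine ⟨1, one_pos, fun y => ?_⟩
    rw [Function.iterate_zero_apply]
    show (1:ℝ) ≤ if (fun k : Fin 0 => y (k : ℕ)) = w then 1 else 0
    rw [if_pos (Subsingleton.elim _ _)]
  | succ N ih =>
    intro w
    have hXne : Nonempty (BSpace n) := ⟨fun _ => w 0⟩
    obtain ⟨x₀, -, hx₀⟩ := isCompact_univ.exists_isMinOn Set.univ_nonempty
      ϱ.continuous.continuousOn
    have hm : 0 < ϱ x₀ := hϱ x₀
    obtain ⟨δ, hδ, hδle⟩ := ih (fun k => w k.succ)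
    refine ⟨ϱ x₀ * δ, mul_pos hm hδ, fun y => ?_⟩
    have step : ∀ z, (ϱ x₀ • cylR n N (fun k => w k.succ)) z
        ≤ transferR n ϱ (cylR n (N+1) w) z := by
      intro z
      rw [transferR_cylR, ContinuousMap.smul_apply, smul_eq_mul]
      exact mul_le_mul_of_nonneg_right (hx₀ (Set.mem_univ (cons n (w 0) z)))
        (cylR_nonneg n N _ z)
    have hmono := transferR_iter_mono hϱ N step y
    rw [transferR_iter_smul, ContinuousMap.smul_apply, smul_eq_mul] at hmono
    rw [Function.iterate_succ_apply]
    refine le_trans ?_ hmono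
    exact mul_le_mul_of_nonneg_left (hδle y) hm.le

section

variable [IsProbabilityMeasure μ]
  (hμ : ∀ a : C(BSpace n, ℂ), ∫ y, transfer n ϱ a y ∂μ = ∫ y, a y ∂μ)
  (hϱpos : ∀ x, 0 < ϱ x)

include hμ

lemma integral_transferR_iter (N : ℕ) (g : C(BSpace n, ℝ)) :
    ∫ y, (transferR n ϱ)^[N] g y ∂μ = ∫ y, g y ∂μ := by
  induction N with
  | zero => simp
  | succ N ih => rw [Function.iterate_succ_apply', integral_transferR hμ, ih]

include hϱpos in
lemma cyl_measure_pos (N : ℕ) (w : Fin N → Fin n) :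
    0 < μ {z : BSpace n | (fun k : Fin N => z (k : ℕ)) = w} := by
  set C := {z : BSpace n | (fun k : Fin N => z (k : ℕ)) = w} with hCdef
  have hC : IsClopen C :=
    (isClopen_discrete ({w} : Set (Fin N → Fin n))).preimage
      (continuous_pi fun k => continuous_apply (k : ℕ))
  have hCm : MeasurableSet C := hC.isClosed.measurableSet
  have hint : ∫ y, cylR n N w y ∂μ = (μ C).toReal := by
    have heq : ∀ y, cylR n N w y = C.indicator (fun _ => (1:ℝ)) y := by
      intro y
      by_cases h : (fun k : Fin N => y (k : ℕ)) = w
      · rw [Set.indicator_of_mem (show y ∈ C from h)]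
        exact if_pos h
      · rw [Set.indicator_of_notMem (show y ∉ C from h)]
        exact if_neg h
    rw [integral_congr_ae (Filter.Eventually.of_forall heq),
      MeasureTheory.integral_indicator_const (1:ℝ) hCm]
    simp [measureReal_def]
  obtain ⟨δ, hδ, hle⟩ := iter_cylR_pos hϱpos N w
  have h2 : δ ≤ ∫ y, (transferR n ϱ)^[N] (cylR n N w) y ∂μ := by
    have hmono := integral_mono (integrable_const δ) (integrable_cm (μ := μ) _) fun y => hle y
    simpa using hmono
  rw [integral_transferR_iter hμ, hint] at h2
  exact (ENNReal.toReal_pos_iff.mp (lt_of_lt_of_le hδ h2)).1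

include hϱpos in
lemma measure_open_pos (U : Set (BSpace n)) (hU : IsOpen U) (hne : U.Nonempty) :
    0 < μ U := by
  obtain ⟨x, hx⟩ := hne
  have hUx : U ∈ nhds x := hU.mem_nhds hx
  rw [nhds_pi] at hUx
  simp only [nhds_discrete] at hUx
  obtain ⟨I, hIfin, t, ht, hsub⟩ := Filter.mem_pi.mp hUx
  obtain ⟨N, hN⟩ := hIfin.bddAbove
  refine lt_of_lt_of_le (cyl_measure_pos hμ hϱpos (N+1) fun k => x (k : ℕ))
    (le_trans (measure_mono ?_) (measure_mono hsub))
  intro z hz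
  rw [Set.mem_pi]
  intro i hi
  have hiN : i ≤ N := hN hi
  have hzi : z i = x i := congrFun hz ⟨i, Nat.lt_succ_of_le hiN⟩
  rw [hzi]
  exact Filter.mem_pure.mp (ht i)

end

end Stmt16Aux

open Stmt16Aux

set_option maxHeartbeats 2000000 in
/-- For every `a ∈ C(X)`, the spectral radius of the weighted composition
operator `π(a)T_φ : f ↦ a·(f∘φ)` on `L^p_μ(X)` is given by
`r(π(a)T_φ) = r_{B(C(X))}(L_{|a|^p})^{1/p}`, where `L_{|a|^p}(b) = L(|a|^p·b)` is the weighted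
transfer operator on `C(X)` with the supremum norm. -/
theorem stmt_16 (n : ℕ) (hn : 2 ≤ n)
    (ϱ : C(BSpace n, ℝ)) (hϱpos : ∀ x, 0 < ϱ x)
    (hϱsum : ∀ y : BSpace n, ∑ i : Fin n, ϱ (cons n i y) = 1)
    (μ : Measure (BSpace n)) [IsProbabilityMeasure μ]
    (hμ : ∀ a : C(BSpace n, ℂ), ∫ y, transfer n ϱ a y ∂μ = ∫ y, a y ∂μ)
    (p : ℝ≥0∞) [Fact (1 ≤ p)] (hp : p ≠ ∞)
    (a : C(BSpace n, ℂ))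
    (A : Lp ℂ p μ →L[ℂ] Lp ℂ p μ)
    (hA : ∀ f : Lp ℂ p μ, (A f : BSpace n → ℂ) =ᵐ[μ] fun x => a x * f (shift n x))
    (LW : C(BSpace n, ℂ) →L[ℂ] C(BSpace n, ℂ))
    (hLW : ∀ (b : C(BSpace n, ℂ)) (y : BSpace n),
      LW b y = ∑ i : Fin n,
        (ϱ (cons n i y) : ℂ) * ((‖a (cons n i y)‖ ^ p.toReal : ℝ) : ℂ) * b (cons n i y)) :
    spectralRadius ℂ A = spectralRadius ℂ LW ^ (1 / p.toReal) := by
  classical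
  have hp1 : (1:ℝ≥0∞) ≤ p := Fact.out
  have hp0 : p ≠ 0 := (lt_of_lt_of_le zero_lt_one hp1).ne'
  have hP : 0 < p.toReal := ENNReal.toReal_pos hp0 hp
  haveI hnz : NeZero n := ⟨by omega⟩
  haveI hXne : Nonempty (BSpace n) := ⟨fun _ => ⟨0, by omega⟩⟩
  -- the weight `|a|^p` as a continuous real map
  set aP : C(BSpace n, ℝ) := ⟨fun x => ‖a x‖ ^ p.toReal,
    (map_continuous a).norm.rpow_const fun x => Or.inr hP.le⟩ with haPdef
  have haPnn : ∀ x, 0 ≤ aP x := fun x => Real.rpow_nonneg (norm_nonneg _) _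
  have haP_apply : ∀ x, ‖a x‖ ^ p.toReal = aP x := fun x => rfl
  -- iterates of the weighted transfer operator applied to 1, as real functions
  set T : C(BSpace n, ℝ) → C(BSpace n, ℝ) := fun g => transferR n ϱ (aP * g) with hTdef
  set gk : ℕ → C(BSpace n, ℝ) := fun k => T^[k] 1 with hgkdef
  have hgk_zero : gk 0 = 1 := rfl
  have hgk_succ : ∀ k, gk (k+1) = transferR n ϱ (aP * gk k) := fun k =>
    Function.iterate_succ_apply' T k 1
  have hgknn : ∀ k y, 0 ≤ gk k y := by
    intro k
    induction k with
    | zero => intro y; rw [hgk_zero]; exact zero_le_one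
    | succ k ih =>
      intro y
      rw [hgk_succ]
      show (0:ℝ) ≤ ∑ i : Fin n, ϱ (cons n i y) * (aP * gk k) (cons n i y)
      refine Finset.sum_nonneg fun i _ => mul_nonneg (hϱpos _).le ?_
      rw [ContinuousMap.mul_apply]
      exact mul_nonneg (haPnn _) (ih _)
  -- `LW^k 1` is the complexification of `gk k`
  have hLWpow : ∀ k, (LW^k) 1 = ofRealCM (gk k) := by
    intro k
    induction k with
    | zero =>
      rw [pow_zero, ContinuousLinearMap.one_apply]
      ext y
      show (1:ℂ) = ((gk 0 y : ℝ) : ℂ)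
      rw [hgk_zero]
      norm_num
    | succ k ih =>
      rw [pow_succ', ContinuousLinearMap.mul_apply, ih]
      ext y
      rw [hLW]
      show ∑ i : Fin n, (ϱ (cons n i y) : ℂ) * ((‖a (cons n i y)‖ ^ p.toReal : ℝ) : ℂ)
          * ((gk k (cons n i y) : ℝ) : ℂ) = ((gk (k+1) y : ℝ) : ℂ)
      rw [hgk_succ]
      show _ = ((∑ i : Fin n, ϱ (cons n i y) * (aP * gk k) (cons n i y) : ℝ) : ℂ)
      simp only [ContinuousMap.mul_apply, haP_apply]
      push_cast
      exact Finset.sum_congr rfl fun i _ => by ring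
  have hnorm1 : ∀ k y, ‖((LW^k) 1) y‖ = gk k y := by
    intro k y
    rw [hLWpow k]
    show ‖((gk k y : ℝ) : ℂ)‖ = gk k y
    rw [Complex.norm_real, Real.norm_eq_abs, abs_of_nonneg (hgknn k y)]
  have hgk_le : ∀ k y, gk k y ≤ ‖(LW^k) 1‖ := by
    intro k y
    rw [← hnorm1 k y]
    exact ContinuousMap.norm_coe_le_norm _ y
  -- pointwise bound for `LW^k b`
  have hLWb : ∀ k (b : C(BSpace n, ℂ)) y, ‖((LW^k) b) y‖ ≤ gk k y * ‖b‖ := by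
    intro k
    induction k with
    | zero =>
      intro b y
      rw [pow_zero, ContinuousLinearMap.one_apply, hgk_zero]
      simpa using b.norm_coe_le_norm y
    | succ k ih =>
      intro b y
      rw [pow_succ', ContinuousLinearMap.mul_apply, hLW]
      refine le_trans (norm_sum_le _ _) ?_
      rw [hgk_succ]
      show _ ≤ (∑ i : Fin n, ϱ (cons n i y) * (aP * gk k) (cons n i y)) * ‖b‖
      rw [Finset.sum_mul]
      refine Finset.sum_le_sum fun i _ => ?_
      rw [norm_mul, norm_mul, Complex.norm_real, Complex.norm_real, Real.norm_eq_abs,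
        Real.norm_eq_abs, abs_of_nonneg (hϱpos _).le,
        abs_of_nonneg (Real.rpow_nonneg (norm_nonneg _) _), ContinuousMap.mul_apply,
        haP_apply]
      calc ϱ (cons n i y) * aP (cons n i y) * ‖((LW^k) b) (cons n i y)‖
          ≤ ϱ (cons n i y) * aP (cons n i y) * (gk k (cons n i y) * ‖b‖) :=
            mul_le_mul_of_nonneg_left (ih b _) (mul_nonneg (hϱpos _).le (haPnn _))
        _ = ϱ (cons n i y) * (aP (cons n i y) * gk k (cons n i y)) * ‖b‖ := by ring
  -- operator norm of `LW^k`
  have hLWnorm : ∀ k : ℕ, ‖LW^k‖ = ‖(LW^k) 1‖ := by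
    intro k
    refine le_antisymm ?_ ?_
    · refine ContinuousLinearMap.opNorm_le_bound _ (norm_nonneg _) fun b => ?_
      refine (ContinuousMap.norm_le _ (mul_nonneg (norm_nonneg _) (norm_nonneg _))).mpr
        fun y => ?_
      exact le_trans (hLWb k b y) (mul_le_mul_of_nonneg_right (hgk_le k y) (norm_nonneg b))
    · have h := (LW^k).le_opNorm 1
      rwa [norm_one, mul_one] at h
  -- the sup norm is attained
  have hMk : ∀ k : ℕ, ∃ y₀, ‖(LW^k) 1‖ = gk k y₀ := by
    intro k
    obtain ⟨y₀, -, hy₀⟩ := isCompact_univ.exists_isMaxOn Set.univ_nonempty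
      (gk k).continuous.continuousOn
    refine ⟨y₀, le_antisymm ?_ ?_⟩
    · refine (ContinuousMap.norm_le _ (hgknn k y₀)).mpr fun y => ?_
      rw [hnorm1 k y]
      exact hy₀ (Set.mem_univ y)
    · rw [← hnorm1 k y₀]
      exact ContinuousMap.norm_coe_le_norm _ y₀
  -- measurability of `‖f ·‖₊ ^ p.toReal`
  have hmeas : ∀ f : Lp ℂ p μ, Measurable fun y => ((‖f y‖₊ : ℝ≥0∞)) ^ p.toReal :=
    fun f => ((Lp.stronglyMeasurable f).measurable.enorm).pow_const _
  -- the fundamental integral identity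
  have hD : ∀ (k : ℕ) (f : Lp ℂ p μ),
      ∫⁻ x, (‖((A^k) f : Lp ℂ p μ) x‖₊ : ℝ≥0∞) ^ p.toReal ∂μ
        = ∫⁻ x, ENNReal.ofReal (gk k x) * (‖f x‖₊ : ℝ≥0∞) ^ p.toReal ∂μ := by
    intro k
    induction k with
    | zero =>
      intro f
      rw [pow_zero]
      simp only [ContinuousLinearMap.one_apply, hgk_zero, ContinuousMap.one_apply,
        ENNReal.ofReal_one, one_mul]
    | succ k ih =>
      intro f
      rw [pow_succ, ContinuousLinearMap.mul_apply, ih (A f)]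
      have hcov := lintegral_cov hμ hϱpos (aP * gk k)
        (fun x => by rw [ContinuousMap.mul_apply]; exact mul_nonneg (haPnn x) (hgknn k x))
        (hmeas f)
      rw [← hgk_succ] at hcov
      rw [← hcov]
      refine lintegral_congr_ae ?_
      filter_upwards [hA f] with x hx
      rw [hx, nnnorm_mul, ENNReal.coe_mul, ENNReal.mul_rpow_of_nonneg _ _ hP.le,
        ContinuousMap.mul_apply, ENNReal.ofReal_mul (haPnn x)]
      have haPx : ((‖a x‖₊ : ℝ≥0∞)) ^ p.toReal = ENNReal.ofReal (aP x) := by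
        rw [← enorm_eq_nnnorm, ← ofReal_norm, ENNReal.ofReal_rpow_of_nonneg (norm_nonneg _) hP.le]
        rfl
      rw [haPx]
      ring
  -- finiteness of the p-integral of an Lp function
  have hfin : ∀ f : Lp ℂ p μ, ∫⁻ x, (‖f x‖₊ : ℝ≥0∞) ^ p.toReal ∂μ ≠ ∞ := by
    intro f
    have h := Lp.eLpNorm_ne_top f
    rw [eLpNorm_eq_lintegral_rpow_enorm_toReal hp0 hp] at h
    simp only [enorm_eq_nnnorm] at h
    intro hI
    rw [hI, ENNReal.top_rpow_of_pos (by positivity)] at h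
    exact h rfl
  -- upper bound for ‖A^k‖
  have hupper : ∀ k : ℕ, ‖A^k‖ ≤ ‖(LW^k) 1‖ ^ (1/p.toReal) := by
    intro k
    refine ContinuousLinearMap.opNorm_le_bound _ (Real.rpow_nonneg (norm_nonneg _) _)
      fun f => ?_
    rw [Lp.norm_def, Lp.norm_def, eLpNorm_eq_lintegral_rpow_enorm_toReal hp0 hp,
      eLpNorm_eq_lintegral_rpow_enorm_toReal hp0 hp]
    have hle : ∫⁻ x, (‖((A^k) f : Lp ℂ p μ) x‖₊ : ℝ≥0∞) ^ p.toReal ∂μ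
        ≤ ENNReal.ofReal (‖(LW^k) 1‖) * ∫⁻ x, (‖f x‖₊ : ℝ≥0∞) ^ p.toReal ∂μ := by
      rw [hD k f, ← lintegral_const_mul _ (hmeas f)]
      refine lintegral_mono fun x => ?_
      exact mul_le_mul_left (ENNReal.ofReal_le_ofReal (hgk_le k x)) _
    have hrfin : (ENNReal.ofReal (‖(LW^k) 1‖) * ∫⁻ x, (‖f x‖₊ : ℝ≥0∞) ^ p.toReal ∂μ)
        ^ (1/p.toReal) ≠ ∞ := by
      refine ENNReal.rpow_ne_top_of_nonneg (by positivity) ?_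
      exact ENNReal.mul_ne_top ENNReal.ofReal_ne_top (hfin f)
    calc ((∫⁻ x, (‖((A^k) f : Lp ℂ p μ) x‖₊ : ℝ≥0∞) ^ p.toReal ∂μ) ^ (1/p.toReal)).toReal
        ≤ ((ENNReal.ofReal (‖(LW^k) 1‖) * ∫⁻ x, (‖f x‖₊ : ℝ≥0∞) ^ p.toReal ∂μ)
            ^ (1/p.toReal)).toReal :=
          ENNReal.toReal_mono hrfin (ENNReal.rpow_le_rpow hle (by positivity))
      _ = ‖(LW^k) 1‖ ^ (1/p.toReal)
            * ((∫⁻ x, (‖f x‖₊ : ℝ≥0∞) ^ p.toReal ∂μ) ^ (1/p.toReal)).toReal := by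
          rw [ENNReal.mul_rpow_of_nonneg _ _ (by positivity), ENNReal.toReal_mul,
            ← ENNReal.toReal_rpow, ENNReal.toReal_ofReal (norm_nonneg _)]
  -- lower bound for ‖A^k‖
  have hlower : ∀ k : ℕ, ‖(LW^k) 1‖ ≤ ‖A^k‖ ^ p.toReal := by
    intro k
    refine le_of_forall_pos_le_add fun ε hε => ?_
    rcases le_or_gt (‖(LW^k) 1‖) ε with hMε | hMε
    · exact hMε.trans (le_add_of_nonneg_left (Real.rpow_nonneg (norm_nonneg _) _))
    obtain ⟨y₀, hy₀⟩ := hMk k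
    set s : Set (BSpace n) := {y | ‖(LW^k) 1‖ - ε < gk k y} with hsdef
    have hso : IsOpen s := isOpen_lt continuous_const (gk k).continuous
    have hsne : s.Nonempty := ⟨y₀, by
      show ‖(LW^k) 1‖ - ε < gk k y₀
      rw [← hy₀]
      exact sub_lt_self _ hε⟩
    have hsm : MeasurableSet s := hso.measurableSet
    have hsμ : μ s ≠ ∞ := measure_ne_top μ s
    have hspos : 0 < μ s := measure_open_pos hμ hϱpos s hso hsne
    set f : Lp ℂ p μ := indicatorConstLp p hsm hsμ (1:ℂ) with hfdef
    have hfnorm : ‖f‖ = (μ s).toReal ^ (1/p.toReal) := by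
      rw [hfdef, norm_indicatorConstLp hp0 hp, norm_one, one_mul, measureReal_def]
    have hfint : ENNReal.ofReal (‖(LW^k) 1‖ - ε) * μ s
        ≤ ∫⁻ x, ENNReal.ofReal (gk k x) * (‖f x‖₊ : ℝ≥0∞) ^ p.toReal ∂μ := by
      have hae : (fun x => ENNReal.ofReal (gk k x) * (‖f x‖₊ : ℝ≥0∞) ^ p.toReal)
          =ᵐ[μ] s.indicator fun x => ENNReal.ofReal (gk k x) := by
        filter_upwards [indicatorConstLp_coeFn (p := p) (hs := hsm) (hμs := hsμ)
          (c := (1:ℂ))] with x hx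
        rw [hx]
        by_cases hxs : x ∈ s
        · rw [Set.indicator_of_mem hxs, Set.indicator_of_mem hxs]
          norm_num
        · rw [Set.indicator_of_notMem hxs, Set.indicator_of_notMem hxs]
          rw [nnnorm_zero, ENNReal.coe_zero, ENNReal.zero_rpow_of_pos hP, mul_zero]
      rw [lintegral_congr_ae hae, lintegral_indicator hsm _]
      calc ENNReal.ofReal (‖(LW^k) 1‖ - ε) * μ s
          = ∫⁻ _ in s, ENNReal.ofReal (‖(LW^k) 1‖ - ε) ∂μ := (setLIntegral_const _ _).symm
        _ ≤ ∫⁻ x in s, ENNReal.ofReal (gk k x) ∂μ := by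
            refine setLIntegral_mono
              (ENNReal.measurable_ofReal.comp (gk k).continuous.measurable) fun x hx =>
                ENNReal.ofReal_le_ofReal (le_of_lt hx)
    have h1 : ENNReal.ofReal (‖(LW^k) 1‖ - ε) * μ s
        ≤ ∫⁻ x, (‖((A^k) f : Lp ℂ p μ) x‖₊ : ℝ≥0∞) ^ p.toReal ∂μ := by
      rw [hD k f]; exact hfint
    have h2 : (‖(LW^k) 1‖ - ε) ^ (1/p.toReal) * (μ s).toReal ^ (1/p.toReal) ≤ ‖(A^k) f‖ := by
      have hmono := ENNReal.toReal_mono (a := (ENNReal.ofReal (‖(LW^k) 1‖ - ε) * μ s)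
          ^ (1/p.toReal))
        (by
          simp only [← enorm_eq_nnnorm]
          rw [← eLpNorm_eq_lintegral_rpow_enorm_toReal hp0 hp]
          exact Lp.eLpNorm_ne_top _)
        (ENNReal.rpow_le_rpow h1 (by positivity))
      rw [Lp.norm_def, eLpNorm_eq_lintegral_rpow_enorm_toReal hp0 hp]
      refine le_trans (le_of_eq ?_) hmono
      rw [ENNReal.mul_rpow_of_nonneg _ _ (by positivity), ENNReal.toReal_mul,
        ← ENNReal.toReal_rpow, ← ENNReal.toReal_rpow,
        ENNReal.toReal_ofReal (by linarith)]
    have h3 : ‖(A^k) f‖ ≤ ‖A^k‖ * (μ s).toReal ^ (1/p.toReal) := by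
      rw [← hfnorm]
      exact (A^k).le_opNorm f
    have hμst : 0 < (μ s).toReal ^ (1/p.toReal) :=
      Real.rpow_pos_of_pos (ENNReal.toReal_pos hspos.ne' hsμ) _
    have h4 : (‖(LW^k) 1‖ - ε) ^ (1/p.toReal) ≤ ‖A^k‖ :=
      le_of_mul_le_mul_right (le_trans h2 h3) hμst
    have h5 : ‖(LW^k) 1‖ - ε ≤ ‖A^k‖ ^ p.toReal := by
      have := Real.rpow_le_rpow (Real.rpow_nonneg (by linarith) _) h4 hP.le
      rwa [← Real.rpow_mul (by linarith), one_div_mul_cancel hP.ne', Real.rpow_one] at this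
    linarith
  -- exact norm formula for ‖A^k‖
  have hAk : ∀ k : ℕ, ‖A^k‖ = ‖(LW^k) 1‖ ^ (1/p.toReal) := by
    intro k
    have hub : ‖A^k‖ ^ p.toReal ≤ ‖(LW^k) 1‖ := by
      have := Real.rpow_le_rpow (norm_nonneg _) (hupper k) hP.le
      rwa [← Real.rpow_mul (norm_nonneg _), one_div_mul_cancel hP.ne', Real.rpow_one] at this
    have h1 : ‖A^k‖ ^ p.toReal = ‖(LW^k) 1‖ := le_antisymm hub (hlower k)
    rw [← h1, ← Real.rpow_mul (norm_nonneg _), mul_one_div_cancel hP.ne', Real.rpow_one]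
  -- Gelfand's formula on both sides
  have hAseq := spectrum.pow_nnnorm_pow_one_div_tendsto_nhds_spectralRadius A
  have hLWseq := spectrum.pow_nnnorm_pow_one_div_tendsto_nhds_spectralRadius LW
  have hLW2 : Filter.Tendsto
      (fun k : ℕ => ((‖LW^k‖₊ : ℝ≥0∞) ^ (1/(k:ℝ))) ^ (1/p.toReal)) Filter.atTop
      (nhds ((spectralRadius ℂ LW) ^ (1/p.toReal))) :=
    (ENNReal.continuous_rpow_const.tendsto _).comp hLWseq
  have heq : ∀ k : ℕ, ((‖A^k‖₊ : ℝ≥0∞) ^ (1/(k:ℝ)))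
      = ((‖LW^k‖₊ : ℝ≥0∞) ^ (1/(k:ℝ))) ^ (1/p.toReal) := by
    intro k
    have e1 : (‖A^k‖₊ : ℝ≥0∞) = (‖LW^k‖₊ : ℝ≥0∞) ^ (1/p.toReal) := by
      rw [← enorm_eq_nnnorm, ← ofReal_norm, ← enorm_eq_nnnorm, ← ofReal_norm, hAk k, ← hLWnorm k,
        ENNReal.ofReal_rpow_of_nonneg (norm_nonneg _) (by positivity)]
    rw [e1, ← ENNReal.rpow_mul, ← ENNReal.rpow_mul, mul_comm]
  exact tendsto_nhds_unique ((Filter.tendsto_congr heq).mp hAseq) hLW2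

end
end
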